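/- arXiv:1110.5045 — 6 statements merged into one kernel-verified Lean document; each statement's English description precedes it below -/
import Mathlib

section
/- (Linear programming bound.) Let Γ be a connected regular graph of valency k ≥ 2 and diameter at least 2. Then N_2(Γ,2) ≥ μ(Γ)·(k − 1 − (1/2)(μ(Γ) − 1)(N(Γ,1) − 2)) + 2. -/
open Finset
open scoped Classical

/-- The ball of radius `r` around `x` in the graph `G`. -/
noncomputable def gBall {V : Type*} [Fintype V] (G : SimpleGraph V) (x : V) (r : ℕ) : Finset V :=
  Finset.univ.filter fun y => G.dist x y ≤ r

/-- The sphere of radius `r` around `x` in the graph `G`. -/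
noncomputable def gSphere {V : Type*} [Fintype V] (G : SimpleGraph V) (x : V) (r : ℕ) : Finset V :=
  Finset.univ.filter fun y => G.dist x y = r

/-- `N(Γ,r)`: the maximum of `|B_r(x) ∩ B_r(y)|` over pairs of distinct vertices. -/
noncomputable def gN {V : Type*} [Fintype V] (G : SimpleGraph V) (r : ℕ) : ℕ :=
  (Finset.univ.filter fun p : V × V => p.1 ≠ p.2).sup
    fun p => (gBall G p.1 r ∩ gBall G p.2 r).card

/-- `N_s(Γ,r)`: the maximum of `|B_r(x) ∩ B_r(y)|` over pairs at distance `s`. -/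
noncomputable def gNs {V : Type*} [Fintype V] (G : SimpleGraph V) (s r : ℕ) : ℕ :=
  (Finset.univ.filter fun p : V × V => G.dist p.1 p.2 = s).sup
    fun p => (gBall G p.1 r ∩ gBall G p.2 r).card

/-- `λ(Γ)`: the maximum number of common neighbours of a pair of adjacent vertices. -/
noncomputable def gLam {V : Type*} [Fintype V] (G : SimpleGraph V) : ℕ :=
  (Finset.univ.filter fun p : V × V => G.Adj p.1 p.2).sup
    fun p => (Finset.univ.filter fun z => G.Adj p.1 z ∧ G.Adj p.2 z).card

/-- `μ(Γ)`: the maximum number of common neighbours of a pair of vertices at distance 2. -/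
noncomputable def gMu {V : Type*} [Fintype V] (G : SimpleGraph V) : ℕ :=
  (Finset.univ.filter fun p : V × V => G.dist p.1 p.2 = 2).sup
    fun p => (Finset.univ.filter fun z => G.Adj p.1 z ∧ G.Adj p.2 z).card

-- Bonferroni lower bound
lemma bonf {ι W : Type*} [DecidableEq ι] [DecidableEq W] (s : Finset ι) (D : ι → Finset W) :
    2 * ∑ a ∈ s, (D a).card ≤ 2 * (s.biUnion D).card + ∑ p ∈ s.offDiag, (D p.1 ∩ D p.2).card := by
  induction s using Finset.induction_on with
  | empty => simp
  | @insert a s ha ih =>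
    rw [Finset.biUnion_insert, Finset.sum_insert ha, Finset.offDiag_insert ha]
    have hd1 : Disjoint (s.offDiag ∪ {a} ×ˢ s) (s ×ˢ {a}) := by
      rw [Finset.disjoint_left]
      rintro ⟨p1, p2⟩ hp hq
      simp only [Finset.mem_union, Finset.mem_offDiag, Finset.mem_product,
        Finset.mem_singleton] at hp hq
      rcases hp with ⟨_, h2, _⟩ | ⟨h1, h2⟩
      · exact ha (hq.2 ▸ h2)
      · exact ha (hq.2 ▸ h2)
    have hd2 : Disjoint (s.offDiag) ({a} ×ˢ s) := by
      rw [Finset.disjoint_left]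
      rintro ⟨p1, p2⟩ hp hq
      simp only [Finset.mem_offDiag, Finset.mem_product, Finset.mem_singleton] at hp hq
      exact ha (hq.1 ▸ hp.1)
    rw [Finset.sum_union hd1, Finset.sum_union hd2]
    have e1 : ∑ p ∈ {a} ×ˢ s, (D p.1 ∩ D p.2).card = ∑ b ∈ s, (D a ∩ D b).card := by
      rw [Finset.singleton_product, Finset.sum_map]; rfl
    have e2 : ∑ p ∈ s ×ˢ {a}, (D p.1 ∩ D p.2).card = ∑ b ∈ s, (D a ∩ D b).card := by
      rw [Finset.product_singleton, Finset.sum_map]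
      refine Finset.sum_congr rfl fun b _ => ?_
      simp [Finset.inter_comm]
    rw [e1, e2]
    have hu : (D a ∪ s.biUnion D).card + (D a ∩ s.biUnion D).card
        = (D a).card + (s.biUnion D).card := Finset.card_union_add_card_inter _ _
    have hsub : (D a ∩ s.biUnion D).card ≤ ∑ b ∈ s, (D a ∩ D b).card := by
      rw [Finset.inter_biUnion]
      exact Finset.card_biUnion_le
    omega

lemma exists_dist_two {W : Type*} (G : SimpleGraph W) (hconn : G.Connected)
    (hdiam : 2 ≤ G.diam) : ∃ u v : W, G.dist u v = 2 := by
  have : Nonempty W := hconn.nonempty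
  obtain ⟨u, v, huv⟩ := G.exists_dist_eq_diam
  have h2 : 2 ≤ G.dist u v := huv ▸ hdiam
  suffices h : ∀ (n : ℕ) (u v : W), G.dist u v = n → 2 ≤ n → ∃ a b : W, G.dist a b = 2 from
    h _ u v rfl h2
  intro n
  induction n using Nat.strong_induction_on with
  | _ n ih =>
    intro u v hd hn
    rcases eq_or_lt_of_le hn with h | h
    · exact ⟨u, v, hd ▸ h.symm⟩
    · obtain ⟨p, hp⟩ := hconn.exists_walk_length_eq_dist u v
      have hlen : 0 < p.length := by omega
      have hnil : ¬ p.Nil := SimpleGraph.Walk.not_nil_iff_lt_length.mpr hlen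
      have hadj : G.Adj u (p.getVert 1) := p.adj_snd hnil
      have htail : p.tail.length + 1 = p.length := SimpleGraph.Walk.length_tail_add_one hnil
      have hle : G.dist (p.getVert 1) v ≤ n - 1 := by
        have : G.dist (p.getVert 1) v ≤ p.tail.length := SimpleGraph.dist_le p.tail
        omega
      have hge : n ≤ 1 + G.dist (p.getVert 1) v := by
        have ht := hconn.dist_triangle (u := u) (v := p.getVert 1) (w := v)
        have h1 : G.dist u (p.getVert 1) = 1 := SimpleGraph.dist_eq_one_iff_adj.mpr hadj
        omega
      exact ih (n - 1) (by omega) (p.getVert 1) v (by omega) (by omega)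


lemma card_le_gN {V : Type*} [Fintype V] (G : SimpleGraph V) {z z' : V} (h : z ≠ z') :
    (gBall G z 1 ∩ gBall G z' 1).card ≤ gN G 1 := by
  have h2 : ((z, z') : V × V) ∈ (Finset.univ.filter fun p : V × V => p.1 ≠ p.2) := by simp [h]
  have h3 := Finset.le_sup (f := fun p : V × V => (gBall G p.1 1 ∩ gBall G p.2 1).card) h2
  unfold gN
  simpa using h3

lemma card_le_gNs {V : Type*} [Fintype V] (G : SimpleGraph V) {x y : V}
    (h : G.dist x y = 2) : (gBall G x 2 ∩ gBall G y 2).card ≤ gNs G 2 2 := by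
  have h2 : ((x, y) : V × V) ∈ (Finset.univ.filter fun p : V × V => G.dist p.1 p.2 = 2) := by
    simp [h]
  have h3 := Finset.le_sup (f := fun p : V × V => (gBall G p.1 2 ∩ gBall G p.2 2).card) h2
  unfold gNs
  simpa using h3

lemma gMu_attained {V : Type*} [Fintype V] (G : SimpleGraph V) {x0 y0 : V}
    (h : G.dist x0 y0 = 2) : ∃ x y : V, G.dist x y = 2 ∧
      gMu G = (Finset.univ.filter fun z => G.Adj x z ∧ G.Adj y z).card := by
  have hne : (Finset.univ.filter fun p : V × V => G.dist p.1 p.2 = 2).Nonempty :=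
    ⟨(x0, y0), by simp [h]⟩
  obtain ⟨⟨x, y⟩, hqmem, hq⟩ := Finset.exists_mem_eq_sup _ hne
    (fun p : V × V => (Finset.univ.filter fun z => G.Adj p.1 z ∧ G.Adj p.2 z).card)
  exact ⟨x, y, by simpa using hqmem, hq⟩

/-- Theorem 2 of the paper, linear programming bound. Let `Γ` be a
connected regular graph of valency `k ≥ 2` and diameter at least 2. Then
`N_2(Γ,2) ≥ μ(Γ)·(k − 1 − (1/2)(μ(Γ) − 1)(N(Γ,1) − 2)) + 2`. -/
theorem statement2 {V : Type*} [Fintype V] (G : SimpleGraph V) (hconn : G.Connected)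
    (k : ℕ) (hk : 2 ≤ k) (hreg : G.IsRegularOfDegree k) (hdiam : 2 ≤ G.diam) :
    (gNs G 2 2 : ℝ) ≥
      (gMu G : ℝ) * ((k : ℝ) - 1 - (1/2) * ((gMu G : ℝ) - 1) * ((gN G 1 : ℝ) - 2)) + 2 := by
  obtain ⟨k', rfl⟩ : ∃ k', k = k' + 1 := ⟨k - 1, by omega⟩
  obtain ⟨x0, y0, hxy0⟩ := exists_dist_two G hconn hdiam
  obtain ⟨x, y, hdxy, hq⟩ := gMu_attained G hxy0
  have hxney : x ≠ y := by
    intro h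
    rw [h, SimpleGraph.dist_self] at hdxy
    omega
  set C : Finset V := Finset.univ.filter fun z => G.Adj x z ∧ G.Adj y z with hC
  have hmu : gMu G = C.card := hq
  set D : V → Finset V := fun z => (insert z (G.neighborFinset z)) \ {x, y} with hD
  have hcardD : ∀ z ∈ C, (D z).card = k' := by
    intro z hz
    simp only [hC, Finset.mem_filter] at hz
    have hzn : z ∉ G.neighborFinset z := by simp
    have hxmem : x ∈ insert z (G.neighborFinset z) := by
      simp [SimpleGraph.mem_neighborFinset, hz.2.1.symm]
    have hymem : y ∈ insert z (G.neighborFinset z) := by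
      simp [SimpleGraph.mem_neighborFinset, hz.2.2.symm]
    have hsubs : ({x, y} : Finset V) ⊆ insert z (G.neighborFinset z) := by
      intro w hw
      rcases Finset.mem_insert.mp hw with h | h
      · exact h ▸ hxmem
      · exact (Finset.mem_singleton.mp h) ▸ hymem
    rw [hD]
    rw [Finset.card_sdiff_of_subset hsubs, Finset.card_insert_of_notMem hzn,
      SimpleGraph.card_neighborFinset_eq_degree, hreg z,
      Finset.card_insert_of_notMem (by simp [hxney]), Finset.card_singleton]
    omega
  have hdistD : ∀ z, ∀ w ∈ D z, G.dist z w ≤ 1 := by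
    intro z w hw
    have hw' : w ∈ insert z (G.neighborFinset z) := (Finset.mem_sdiff.mp hw).1
    rcases Finset.mem_insert.mp hw' with h | h
    · rw [← h, SimpleGraph.dist_self]; omega
    · have hadj : G.Adj z w := by simpa using h
      exact le_of_eq (SimpleGraph.dist_eq_one_iff_adj.mpr hadj)
  have hDx : ∀ z, x ∉ D z := fun z h => by
    have := (Finset.mem_sdiff.mp h).2; simp at this
  have hDy : ∀ z, y ∉ D z := fun z h => by
    have := (Finset.mem_sdiff.mp h).2; simp at this
  set BU := C.biUnion D with hBU
  have hBUsub : BU ⊆ gBall G x 2 ∩ gBall G y 2 := by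
    intro w hw
    obtain ⟨z, hz, hwz⟩ := Finset.mem_biUnion.mp hw
    simp only [hC, Finset.mem_filter] at hz
    have hdzw : G.dist z w ≤ 1 := hdistD z w hwz
    have hx1 : G.dist x z = 1 := SimpleGraph.dist_eq_one_iff_adj.mpr hz.2.1
    have hy1 : G.dist y z = 1 := SimpleGraph.dist_eq_one_iff_adj.mpr hz.2.2
    have t1 := hconn.dist_triangle (u := x) (v := z) (w := w)
    have t2 := hconn.dist_triangle (u := y) (v := z) (w := w)
    simp only [gBall, Finset.mem_inter, Finset.mem_filter, Finset.mem_univ, true_and]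
    omega
  have hSsub : insert x (insert y BU) ⊆ gBall G x 2 ∩ gBall G y 2 := by
    intro w hw
    rcases Finset.mem_insert.mp hw with h | h
    · subst h
      simp only [gBall, Finset.mem_inter, Finset.mem_filter, Finset.mem_univ, true_and]
      rw [SimpleGraph.dist_self, SimpleGraph.dist_comm]
      omega
    rcases Finset.mem_insert.mp h with h | h
    · subst h
      simp only [gBall, Finset.mem_inter, Finset.mem_filter, Finset.mem_univ, true_and]
      rw [SimpleGraph.dist_self, hdxy]
      omega
    · exact hBUsub h
  have hScard : (insert x (insert y BU)).card = BU.card + 2 := by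
    rw [Finset.card_insert_of_notMem, Finset.card_insert_of_notMem]
    · exact fun h => hDy _ (Finset.mem_biUnion.mp h).choose_spec.2
    · intro h
      rcases Finset.mem_insert.mp h with h | h
      · exact hxney h
      · exact hDx _ (Finset.mem_biUnion.mp h).choose_spec.2
  have hF1 : BU.card + 2 ≤ gNs G 2 2 := by
    calc BU.card + 2 = (insert x (insert y BU)).card := hScard.symm
      _ ≤ (gBall G x 2 ∩ gBall G y 2).card := Finset.card_le_card hSsub
      _ ≤ gNs G 2 2 := card_le_gNs G hdxy
  have hsumD : ∑ z ∈ C, (D z).card = C.card * k' := by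
    rw [Finset.sum_congr rfl hcardD, Finset.sum_const, smul_eq_mul]
  have hF2 : 2 * (C.card * k') ≤
      2 * BU.card + ∑ p ∈ C.offDiag, (D p.1 ∩ D p.2).card := by
    rw [← hsumD]; exact bonf C D
  have hpair : ∀ p ∈ C.offDiag, (D p.1 ∩ D p.2).card + 2 ≤ gN G 1 := by
    rintro ⟨z, z'⟩ hp
    obtain ⟨hz, hz', hzz'⟩ := Finset.mem_offDiag.mp hp
    have hsub1 : insert x (insert y (D z ∩ D z')) ⊆ gBall G z 1 ∩ gBall G z' 1 := by
      intro w hw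
      simp only [hC, Finset.mem_filter] at hz hz'
      simp only [gBall, Finset.mem_inter, Finset.mem_filter, Finset.mem_univ, true_and]
      rcases Finset.mem_insert.mp hw with h | h
      · subst h
        exact ⟨le_of_eq (SimpleGraph.dist_eq_one_iff_adj.mpr hz.2.1.symm),
          le_of_eq (SimpleGraph.dist_eq_one_iff_adj.mpr hz'.2.1.symm)⟩
      rcases Finset.mem_insert.mp h with h | h
      · subst h
        exact ⟨le_of_eq (SimpleGraph.dist_eq_one_iff_adj.mpr hz.2.2.symm),
          le_of_eq (SimpleGraph.dist_eq_one_iff_adj.mpr hz'.2.2.symm)⟩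
      · obtain ⟨h1, h2⟩ := Finset.mem_inter.mp h
        exact ⟨hdistD z w h1, hdistD z' w h2⟩
    have hcard1 : (insert x (insert y (D z ∩ D z'))).card = (D z ∩ D z').card + 2 := by
      rw [Finset.card_insert_of_notMem, Finset.card_insert_of_notMem]
      · exact fun h => hDy z (Finset.mem_inter.mp h).1
      · intro h
        rcases Finset.mem_insert.mp h with h | h
        · exact hxney h
        · exact hDx z (Finset.mem_inter.mp h).1
    calc (D z ∩ D z').card + 2 = (insert x (insert y (D z ∩ D z'))).card := hcard1.symm
      _ ≤ (gBall G z 1 ∩ gBall G z' 1).card := Finset.card_le_card hsub1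
      _ ≤ gN G 1 := card_le_gN G hzz'
  have hF3 : (∑ p ∈ C.offDiag, (D p.1 ∩ D p.2).card) + C.offDiag.card * 2 ≤
      C.offDiag.card * gN G 1 := by
    have h1 := Finset.sum_le_card_nsmul C.offDiag
      (fun p => (D p.1 ∩ D p.2).card + 2) (gN G 1) hpair
    rw [Finset.sum_add_distrib, Finset.sum_const, smul_eq_mul, smul_eq_mul] at h1
    exact h1
  have hF4 : C.offDiag.card + C.card = C.card * C.card := by
    have h1 : C.offDiag.card = C.card * C.card - C.card := Finset.offDiag_card C
    have h2 : C.card ≤ C.card * C.card := by nlinarith [C.card.zero_le]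
    omega
  -- pass to the reals
  rw [hmu]
  have r1 : ((BU.card : ℝ)) + 2 ≤ (gNs G 2 2 : ℝ) := by exact_mod_cast hF1
  have r2 : 2 * ((C.card : ℝ) * (k' : ℝ)) ≤
      2 * (BU.card : ℝ) + ((∑ p ∈ C.offDiag, (D p.1 ∩ D p.2).card : ℕ) : ℝ) := by
    exact_mod_cast hF2
  have r3 : ((∑ p ∈ C.offDiag, (D p.1 ∩ D p.2).card : ℕ) : ℝ) + (C.offDiag.card : ℝ) * 2 ≤
      (C.offDiag.card : ℝ) * (gN G 1 : ℝ) := by exact_mod_cast hF3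
  have r4 : (C.offDiag.card : ℝ) + (C.card : ℝ) = (C.card : ℝ) * (C.card : ℝ) := by
    exact_mod_cast hF4
  have hodr : (C.offDiag.card : ℝ) = (C.card : ℝ) * (C.card : ℝ) - (C.card : ℝ) := by
    linarith [r4]
  have r3' : ((∑ p ∈ C.offDiag, (D p.1 ∩ D p.2).card : ℕ) : ℝ) ≤
      ((C.card : ℝ) * (C.card : ℝ) - (C.card : ℝ)) * ((gN G 1 : ℝ) - 2) := by
    rw [← hodr]
    nlinarith [r3]
  have hkc : ((k' + 1 : ℕ) : ℝ) = (k' : ℝ) + 1 := by push_cast; ring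
  rw [hkc]
  nlinarith [r1, r2, r3']
end

section
/- Suppose Γ is a connected regular graph of valency k with diameter at least 2 which contains no triangles and no pentagons (cycles of length 3 or 5). If μ(Γ) ≥ 2 and k ≥ 1 + C(μ(Γ),2), then N_2(Γ,2) ≥ N_1(Γ,2). -/
open Finset
open scoped Classical

section Helpers

variable {V : Type*} (G : SimpleGraph V)


variable {V : Type*} (G : SimpleGraph V)

private lemma noTriangle
    (hc : ∀ (v : V) (p : G.Walk v v), p.IsCycle → p.length ≠ 3 ∧ p.length ≠ 5)
    {a b c : V} (hab : G.Adj a b) (hbc : G.Adj b c) (hac : G.Adj a c) : False := by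
  let p : G.Walk a a :=
    SimpleGraph.Walk.cons hab (SimpleGraph.Walk.cons hbc
      (SimpleGraph.Walk.cons hac.symm SimpleGraph.Walk.nil))
  have hcyc : p.IsCycle := by
    simp [p, SimpleGraph.Walk.isCycle_def, SimpleGraph.Walk.isTrail_def, hab.ne, hbc.ne, hac.ne,
      hab.ne', hbc.ne', hac.ne', Sym2.eq_iff]
  exact (hc a p hcyc).1 (by simp [p])

private lemma noPentagon
    (hc : ∀ (v : V) (p : G.Walk v v), p.IsCycle → p.length ≠ 3 ∧ p.length ≠ 5)
    {a b c d e : V} (hab : G.Adj a b) (hbc : G.Adj b c) (hcd : G.Adj c d) (hde : G.Adj d e)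
    (hea : G.Adj e a) (hac : a ≠ c) (had : a ≠ d) (hbd : b ≠ d) (hbe : b ≠ e) (hce : c ≠ e) :
    False := by
  let p : G.Walk a a :=
    SimpleGraph.Walk.cons hab (SimpleGraph.Walk.cons hbc (SimpleGraph.Walk.cons hcd
      (SimpleGraph.Walk.cons hde (SimpleGraph.Walk.cons hea SimpleGraph.Walk.nil))))
  have hcyc : p.IsCycle := by
    simp [p, SimpleGraph.Walk.isCycle_def, SimpleGraph.Walk.isTrail_def, hab.ne, hbc.ne, hcd.ne,
      hde.ne, hea.ne, hab.ne', hbc.ne', hcd.ne', hde.ne', hea.ne', hac, had, hbd, hbe, hce,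
      hac.symm, had.symm, hbd.symm, hbe.symm, hce.symm, Sym2.eq_iff]
  exact (hc a p hcyc).2 (by simp [p])

private lemma dist2_exists (hconn : G.Connected) {x z : V}
    (h : G.dist x z = 2) : ∃ w, G.Adj x w ∧ G.Adj w z := by
  obtain ⟨p, hp⟩ := (hconn x z).exists_walk_length_eq_dist
  rw [h] at hp
  cases p with
  | nil => simp at hp
  | cons h1 q =>
    cases q with
    | nil => simp at hp
    | cons h2 r =>
      simp at hp
      cases r with
      | nil => exact ⟨_, h1, h2⟩
      | cons h3 s => simp at hp

private lemma dist_le_two_of {x z w : V} (h1 : G.Adj x w) (h2 : G.Adj w z) :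
    G.dist x z ≤ 2 := by
  simpa using SimpleGraph.dist_le (SimpleGraph.Walk.cons h1
    (SimpleGraph.Walk.cons h2 SimpleGraph.Walk.nil))

private lemma dist_le_two_of_adj {x z : V} (h1 : G.Adj x z) : G.dist x z ≤ 2 := by
  have := SimpleGraph.dist_le (SimpleGraph.Walk.cons h1 SimpleGraph.Walk.nil)
  simpa using le_trans this (by norm_num)

private lemma dist_le_two_cases (hconn : G.Connected) {x z : V} (h : G.dist x z ≤ 2) :
    x = z ∨ G.Adj x z ∨ G.dist x z = 2 := by
  interval_cases h' : G.dist x z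
  · exact Or.inl ((hconn.dist_eq_zero_iff).mp h')
  · exact Or.inr (Or.inl (SimpleGraph.dist_eq_one_iff_adj.mp h'))
  · exact Or.inr (Or.inr rfl)

private lemma two_mul_choose_two (n : ℕ) : 2 * n.choose 2 = n * (n - 1) := by
  induction n with
  | zero => rfl
  | succ n ih =>
    rw [Nat.choose_succ_succ, Nat.mul_add, ih, Nat.choose_one_right]
    cases n with
    | zero => rfl
    | succ p =>
      simp only [Nat.succ_sub_one]
      ring

end Helpers

section Steps

variable {V : Type*} [Fintype V] (G : SimpleGraph V)

variable {V : Type*} [Fintype V] (G : SimpleGraph V)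

private lemma step1 (hconn : G.Connected) (k : ℕ) (hreg : G.IsRegularOfDegree k)
    (htri : ∀ {a b c : V}, G.Adj a b → G.Adj b c → G.Adj a c → False)
    (hpent : ∀ {a b c d e : V}, G.Adj a b → G.Adj b c → G.Adj c d → G.Adj d e →
      G.Adj e a → a ≠ c → a ≠ d → b ≠ d → b ≠ e → c ≠ e → False)
    {x y : V} (hadj : G.Adj x y) :
    (gBall G x 2 ∩ gBall G y 2).card ≤ 2 * k := by
  have hd2a : ∀ {u z : V}, G.dist u z = 2 → ∃ w, G.Adj u w ∧ G.Adj w z := fun h =>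
    (by
      obtain ⟨p, hp⟩ := (hconn _ _).exists_walk_length_eq_dist
      rw [h] at hp
      cases p with
      | nil => simp at hp
      | cons h1 q =>
        cases q with
        | nil => simp at hp
        | cons h2 r =>
          simp at hp
          cases r with
          | nil => exact ⟨_, h1, h2⟩
          | cons h3 s => simp at hp)
  have hsub : gBall G x 2 ∩ gBall G y 2 ⊆ G.neighborFinset x ∪ G.neighborFinset y := by
    intro z hz
    simp only [gBall, mem_inter, mem_filter, mem_univ, true_and] at hz
    obtain ⟨hzx, hzy⟩ := hz
    simp only [mem_union, SimpleGraph.mem_neighborFinset]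
    by_contra hcon
    push_neg at hcon
    obtain ⟨hxz, hyz⟩ := hcon
    have hzxne : x ≠ z := fun h => hyz (h ▸ hadj.symm)
    have hzyne : y ≠ z := fun h => hxz (h ▸ hadj)
    -- get dist x z = 2 and dist y z = 2
    have hdx : G.dist x z = 2 := by
      rcases (by
        interval_cases h' : G.dist x z
        · exact Or.inl ((hconn.dist_eq_zero_iff).mp h')
        · exact Or.inr (Or.inl (SimpleGraph.dist_eq_one_iff_adj.mp h'))
        · exact Or.inr (Or.inr rfl) : x = z ∨ G.Adj x z ∨ G.dist x z = 2) with
        h | h | h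
      · exact absurd h hzxne
      · exact absurd h hxz
      · exact h
    have hdy : G.dist y z = 2 := by
      rcases (by
        interval_cases h' : G.dist y z
        · exact Or.inl ((hconn.dist_eq_zero_iff).mp h')
        · exact Or.inr (Or.inl (SimpleGraph.dist_eq_one_iff_adj.mp h'))
        · exact Or.inr (Or.inr rfl) : y = z ∨ G.Adj y z ∨ G.dist y z = 2) with
        h | h | h
      · exact absurd h hzyne
      · exact absurd h hyz
      · exact h
    obtain ⟨w1, hxw1, hw1z⟩ := hd2a hdx
    obtain ⟨w2, hyw2, hw2z⟩ := hd2a hdy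
    have hww : w2 ≠ w1 := by
      rintro rfl
      exact htri hadj hyw2 hxw1
    -- pentagon x-y-w2-z-w1-x
    exact hpent hadj hyw2 hw2z hw1z.symm hxw1.symm
      (fun h => hxz (h ▸ hw2z)) hzxne hzyne (fun h => hyz (h ▸ hw1z)) hww
  have hdisj : Disjoint (G.neighborFinset x) (G.neighborFinset y) := by
    rw [Finset.disjoint_left]
    intro z hzx hzy
    rw [SimpleGraph.mem_neighborFinset] at hzx hzy
    exact htri hadj hzy hzx
  calc (gBall G x 2 ∩ gBall G y 2).card
      ≤ (G.neighborFinset x ∪ G.neighborFinset y).card := Finset.card_le_card hsub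
    _ = k + k := by
        rw [Finset.card_union_of_disjoint hdisj, SimpleGraph.card_neighborFinset_eq_degree,
          SimpleGraph.card_neighborFinset_eq_degree, hreg x, hreg y]
    _ = 2 * k := by ring


variable {V : Type*} [Fintype V] (G : SimpleGraph V)

private lemma step2 (hconn : G.Connected) (k : ℕ) (hreg : G.IsRegularOfDegree k)
    (htri : ∀ {a b c : V}, G.Adj a b → G.Adj b c → G.Adj a c → False)
    {x y : V} (hdist : G.dist x y = 2) (m : ℕ)
    (hm : (Finset.univ.filter fun z => G.Adj x z ∧ G.Adj y z).card = m)
    (hmu2 : ∀ c c' : V, G.dist c c' = 2 →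
      (Finset.univ.filter fun z => G.Adj c z ∧ G.Adj c' z).card ≤ m)
    (hm2 : 2 ≤ m) (hk : 2 + m * (m - 1) ≤ 2 * k) :
    2 * k ≤ (gBall G x 2 ∩ gBall G y 2).card := by
  obtain ⟨q, hq⟩ : ∃ q, m = q + 2 := ⟨m - 2, by omega⟩
  subst hq
  set C : Finset V := Finset.univ.filter fun z => G.Adj x z ∧ G.Adj y z with hCdef
  have hCadj : ∀ c ∈ C, G.Adj x c ∧ G.Adj y c := by
    intro c hc; simpa [hCdef] using hc
  have hxy : x ≠ y := by
    rintro rfl; rw [SimpleGraph.dist_self] at hdist; omega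
  set U : Finset V := C.biUnion (fun c => G.neighborFinset c) with hUdef
  set A : Finset V := U \ {x, y} with hAdef
  set t : V → ℕ := fun z => (C.filter fun c => G.Adj c z).card with htdef
  have hCne : C.Nonempty := by rw [← Finset.card_pos, hm]; omega
  obtain ⟨c0, hc0⟩ := hCne
  have hxU : x ∈ U := Finset.mem_biUnion.mpr
    ⟨c0, hc0, (SimpleGraph.mem_neighborFinset _ _ _).mpr (hCadj c0 hc0).1.symm⟩
  have hyU : y ∈ U := Finset.mem_biUnion.mpr
    ⟨c0, hc0, (SimpleGraph.mem_neighborFinset _ _ _).mpr (hCadj c0 hc0).2.symm⟩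
  have hd2 : ∀ {u w z : V}, G.Adj u w → G.Adj w z → G.dist u z ≤ 2 := by
    intro u w z h1 h2
    simpa using SimpleGraph.dist_le (SimpleGraph.Walk.cons h1
      (SimpleGraph.Walk.cons h2 SimpleGraph.Walk.nil))
  -- membership in the intersection of balls
  have hball : ∀ z : V, G.dist x z ≤ 2 → G.dist y z ≤ 2 →
      z ∈ gBall G x 2 ∩ gBall G y 2 := by
    intro z h1 h2
    simp [gBall, h1, h2]
  have hsub : A ∪ (C ∪ {x, y}) ⊆ gBall G x 2 ∩ gBall G y 2 := by
    intro z hz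
    rcases Finset.mem_union.mp hz with hz | hz
    · obtain ⟨c, hc, hzc⟩ := Finset.mem_biUnion.mp (Finset.mem_sdiff.mp hz).1
      rw [SimpleGraph.mem_neighborFinset] at hzc
      exact hball z (hd2 (hCadj c hc).1 hzc) (hd2 (hCadj c hc).2 hzc)
    · rcases Finset.mem_union.mp hz with hz | hz
      · obtain ⟨h1, h2⟩ := hCadj z hz
        refine hball z ?_ ?_
        · have := SimpleGraph.dist_le (SimpleGraph.Walk.cons h1 SimpleGraph.Walk.nil)
          simp at this; omega
        · have := SimpleGraph.dist_le (SimpleGraph.Walk.cons h2 SimpleGraph.Walk.nil)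
          simp at this; omega
      · have hz' : z = x ∨ z = y := by simpa using hz
        rcases hz' with rfl | rfl
        · refine hball z (by simp [SimpleGraph.dist_self]) ?_
          rw [SimpleGraph.dist_comm]; omega
        · exact hball z (by omega) (by simp [SimpleGraph.dist_self])
  -- disjointness and the cardinality lower bound
  have hCxy : Disjoint C ({x, y} : Finset V) := by
    rw [Finset.disjoint_right]
    intro z hz hzC
    obtain ⟨h1, h2⟩ := hCadj z hzC
    rcases Finset.mem_insert.mp hz with rfl | hz
    · exact G.loopless.irrefl z h1
    · rw [Finset.mem_singleton] at hz; subst hz; exact G.loopless.irrefl z h2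
  have hAC : Disjoint A (C ∪ {x, y}) := by
    rw [Finset.disjoint_left]
    intro z hzA hzC
    have hznxy : z ∉ ({x, y} : Finset V) := (Finset.mem_sdiff.mp hzA).2
    rcases Finset.mem_union.mp hzC with hzC | hzC
    · obtain ⟨c, hc, hzc⟩ := Finset.mem_biUnion.mp (Finset.mem_sdiff.mp hzA).1
      rw [SimpleGraph.mem_neighborFinset] at hzc
      exact htri (hCadj c hc).1 hzc (hCadj z hzC).1
    · exact hznxy hzC
  have hcard1 : A.card + ((q + 2) + 2) ≤ (gBall G x 2 ∩ gBall G y 2).card := by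
    have h1 : (A ∪ (C ∪ {x, y})).card = A.card + (C.card + ({x, y} : Finset V).card) := by
      rw [Finset.card_union_of_disjoint hAC, Finset.card_union_of_disjoint hCxy]
    have h2 : ({x, y} : Finset V).card = 2 := Finset.card_pair hxy
    calc A.card + ((q + 2) + 2) = (A ∪ (C ∪ {x, y})).card := by rw [h1, h2, hm]
      _ ≤ _ := Finset.card_le_card hsub
  -- double counting: ∑ z ∈ U, t z = m * k
  have hNU : ∀ c ∈ C, G.neighborFinset c ⊆ U := by
    intro c hc z hz; exact Finset.mem_biUnion.mpr ⟨c, hc, hz⟩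
  have hsum1 : ∑ z ∈ U, t z = (q + 2) * k := by
    have e1 : ∀ c ∈ C, (G.neighborFinset c).card =
        ∑ z ∈ U, if G.Adj c z then 1 else 0 := by
      intro c hc
      rw [← Finset.card_filter]
      congr 1
      ext z
      simp only [Finset.mem_filter, SimpleGraph.mem_neighborFinset]
      exact ⟨fun h => ⟨hNU c hc ((SimpleGraph.mem_neighborFinset _ _ _).mpr h), h⟩,
        fun h => h.2⟩
    have e2 : ∑ c ∈ C, (G.neighborFinset c).card = ∑ z ∈ U, t z := by
      rw [Finset.sum_congr rfl e1, Finset.sum_comm]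
      refine Finset.sum_congr rfl fun z _ => ?_
      show (∑ c ∈ C, if G.Adj c z then 1 else 0) = (C.filter fun c => G.Adj c z).card
      exact (Finset.card_filter _ _).symm
    rw [← e2]
    have : ∀ c ∈ C, (G.neighborFinset c).card = k := fun c _ => by
      rw [SimpleGraph.card_neighborFinset_eq_degree]; exact hreg c
    rw [Finset.sum_congr rfl this, Finset.sum_const, hm, smul_eq_mul]
  have htx : t x = (q + 2) := by
    rw [htdef]
    simp only
    rw [Finset.filter_true_of_mem (fun c hc => (hCadj c hc).1.symm), hm]
  have hty : t y = (q + 2) := by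
    rw [htdef]
    simp only
    rw [Finset.filter_true_of_mem (fun c hc => (hCadj c hc).2.symm), hm]
  have hxyU : ({x, y} : Finset V) ⊆ U := by
    intro z hz
    rcases Finset.mem_insert.mp hz with rfl | hz
    · exact hxU
    · rw [Finset.mem_singleton] at hz; subst hz; exact hyU
  have hsum2 : ∑ z ∈ A, t z + 2 * (q + 2) = (q + 2) * k := by
    have := Finset.sum_sdiff (f := t) hxyU
    rw [Finset.sum_pair hxy] at this
    rw [hAdef]
    omega
  -- per-element inequality 2*t ≤ 2 + t*(t-1)
  have hnum : ∀ n : ℕ, 2 * n ≤ 2 + n * (n - 1) := by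
    intro n
    cases n with
    | zero => simp
    | succ u =>
      simp only [Nat.succ_sub_one]
      cases u with
      | zero => norm_num
      | succ v =>
        have e : (v + 1 + 1) * (v + 1) = v * v + 3 * v + 2 := by ring
        omega
  have hsum3 : 2 * ∑ z ∈ A, t z ≤ 2 * A.card + ∑ z ∈ A, t z * (t z - 1) := by
    calc 2 * ∑ z ∈ A, t z = ∑ z ∈ A, 2 * t z := by rw [Finset.mul_sum]
      _ ≤ ∑ z ∈ A, (2 + t z * (t z - 1)) := Finset.sum_le_sum (fun z _ => hnum (t z))
      _ = 2 * A.card + ∑ z ∈ A, t z * (t z - 1) := by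
          rw [Finset.sum_add_distrib, Finset.sum_const, smul_eq_mul, mul_comm]
  -- per-pair bound
  have hpair : ∀ p ∈ C.offDiag, (A.filter fun z => G.Adj p.1 z ∧ G.Adj p.2 z).card ≤ q := by
    rintro ⟨c, c'⟩ hp
    show (A.filter fun z => G.Adj c z ∧ G.Adj c' z).card ≤ q
    rw [Finset.mem_offDiag] at hp
    obtain ⟨hc, hc', hne⟩ := hp
    have hnadj : ¬ G.Adj c c' := fun h => htri (hCadj c hc).1 h (hCadj c' hc').1
    have hdcc : G.dist c c' = 2 := by
      have hle : G.dist c c' ≤ 2 := hd2 (hCadj c hc).1.symm (hCadj c' hc').1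
      have h0 : G.dist c c' ≠ 0 := fun h => hne ((hconn.dist_eq_zero_iff).mp h)
      have h1 : G.dist c c' ≠ 1 := fun h => hnadj (SimpleGraph.dist_eq_one_iff_adj.mp h)
      omega
    have hW := hmu2 c c' hdcc
    have hxyW : ({x, y} : Finset V) ⊆ Finset.univ.filter fun z => G.Adj c z ∧ G.Adj c' z := by
      intro z hz
      have hz' : z = x ∨ z = y := by simpa using hz
      rcases hz' with rfl | rfl
      · simp [(hCadj c hc).1.symm, (hCadj c' hc').1.symm]
      · simp [(hCadj c hc).2.symm, (hCadj c' hc').2.symm]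
    have hsubW : (A.filter fun z => G.Adj c z ∧ G.Adj c' z) ⊆
        (Finset.univ.filter fun z => G.Adj c z ∧ G.Adj c' z) \ {x, y} := by
      intro z hz
      rw [Finset.mem_filter] at hz
      rw [Finset.mem_sdiff]
      exact ⟨by simp [hz.2.1, hz.2.2], (Finset.mem_sdiff.mp hz.1).2⟩
    have hcc := Finset.card_le_card hsubW
    rw [Finset.card_sdiff_of_subset hxyW, Finset.card_pair hxy] at hcc
    omega
  -- double count pairs
  have hsum4 : ∑ z ∈ A, t z * (t z - 1) ≤ (q + 2) * (q + 1) * q := by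
    have e0 : ∀ n : ℕ, n * n - n = n * (n - 1) := by
      intro n
      cases n with
      | zero => rfl
      | succ u =>
        simp only [Nat.succ_sub_one]
        have : (u + 1) * (u + 1) = (u + 1) * u + (u + 1) := by ring
        omega
    have e1 : ∀ z : V, t z * (t z - 1) = ((C.filter fun c => G.Adj c z).offDiag).card := by
      intro z
      simp only [htdef]
      rw [Finset.offDiag_card]
      exact (e0 _).symm
    have e2 : ∀ z : V, (C.filter fun c => G.Adj c z).offDiag
        = C.offDiag.filter fun p => G.Adj p.1 z ∧ G.Adj p.2 z := by
      intro z
      ext ⟨c, c'⟩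
      simp only [Finset.mem_offDiag, Finset.mem_filter]
      tauto
    calc ∑ z ∈ A, t z * (t z - 1)
        = ∑ z ∈ A, (C.offDiag.filter fun p => G.Adj p.1 z ∧ G.Adj p.2 z).card := by
          refine Finset.sum_congr rfl fun z _ => ?_
          rw [e1, e2]
      _ = ∑ p ∈ C.offDiag, (A.filter fun z => G.Adj p.1 z ∧ G.Adj p.2 z).card := by
          simp only [Finset.card_filter]
          exact Finset.sum_comm
      _ ≤ ∑ _p ∈ C.offDiag, q := Finset.sum_le_sum hpair
      _ = C.offDiag.card * q := by rw [Finset.sum_const, smul_eq_mul]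
      _ = (q + 2) * (q + 1) * q := by
          rw [Finset.offDiag_card, hm]
          have h2 : (q + 2) * (q + 2) - (q + 2) = (q + 2) * (q + 1) := by
            have : (q + 2) * (q + 2) = (q + 2) * (q + 1) + (q + 2) := by ring
            omega
          rw [h2]
  -- final arithmetic
  have hk' : 2 + (q + 2) * (q + 1) ≤ 2 * k := by
    have e : (q + 2) - 1 = q + 1 := by omega
    rwa [e] at hk
  have e : (q + 2) * k = q * k + 2 * k := by ring
  rw [e] at hsum2
  have hmul : 2 * q + (q + 2) * (q + 1) * q ≤ 2 * (q * k) := by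
    calc 2 * q + (q + 2) * (q + 1) * q = (2 + (q + 2) * (q + 1)) * q := by ring
      _ ≤ (2 * k) * q := Nat.mul_le_mul_right q hk'
      _ = 2 * (q * k) := by ring
  omega

end Steps

/-- Corollary 1 of the paper. Suppose `Γ` is a connected regular graph of
valency `k` with diameter at least 2 containing no triangles and no pentagons. If
`μ(Γ) ≥ 2` and `k ≥ 1 + C(μ(Γ),2)`, then `N_2(Γ,2) ≥ N_1(Γ,2)`. -/
theorem statement3 {V : Type*} [Fintype V] (G : SimpleGraph V) (hconn : G.Connected)
    (k : ℕ) (hreg : G.IsRegularOfDegree k) (hdiam : 2 ≤ G.diam)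
    (hcycles : ∀ (v : V) (p : G.Walk v v), p.IsCycle → p.length ≠ 3 ∧ p.length ≠ 5)
    (hmu : 2 ≤ gMu G) (hk : 1 + Nat.choose (gMu G) 2 ≤ k) :
    gNs G 1 2 ≤ gNs G 2 2 := by
  have htri : ∀ {a b c : V}, G.Adj a b → G.Adj b c → G.Adj a c → False :=
    fun hab hbc hac => noTriangle G hcycles hab hbc hac
  have hpent : ∀ {a b c d e : V}, G.Adj a b → G.Adj b c → G.Adj c d → G.Adj d e →
      G.Adj e a → a ≠ c → a ≠ d → b ≠ d → b ≠ e → c ≠ e → False :=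
    fun hab hbc hcd hde hea hac had hbd hbe hce =>
      noPentagon G hcycles hab hbc hcd hde hea hac had hbd hbe hce
  -- Step A : `N_1(Γ,2) ≤ 2k`
  have hA : gNs G 1 2 ≤ 2 * k := by
    rw [gNs]
    refine Finset.sup_le ?_
    intro p hp
    rw [Finset.mem_filter] at hp
    have hadj : G.Adj p.1 p.2 := SimpleGraph.dist_eq_one_iff_adj.mp hp.2
    exact step1 G hconn k hreg htri hpent hadj
  -- Step B : `2k ≤ N_2(Γ,2)`
  have hne : (Finset.univ.filter fun p : V × V => G.dist p.1 p.2 = 2).Nonempty := by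
    by_contra h
    rw [Finset.not_nonempty_iff_eq_empty] at h
    rw [gMu, h] at hmu
    simp at hmu
  obtain ⟨p, hpmem, hsup⟩ := Finset.exists_mem_eq_sup
    (Finset.univ.filter fun p : V × V => G.dist p.1 p.2 = 2) hne
    (fun p : V × V => (Finset.univ.filter fun z => G.Adj p.1 z ∧ G.Adj p.2 z).card)
  rw [Finset.mem_filter] at hpmem
  have hdist : G.dist p.1 p.2 = 2 := hpmem.2
  have hm : (Finset.univ.filter fun z => G.Adj p.1 z ∧ G.Adj p.2 z).card = gMu G := by
    rw [gMu]
    exact hsup.symm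
  have hmu2 : ∀ c c' : V, G.dist c c' = 2 →
      (Finset.univ.filter fun z => G.Adj c z ∧ G.Adj c' z).card ≤ gMu G := by
    intro c c' hd
    have hmem : ((c, c') : V × V) ∈
        (Finset.univ.filter fun p : V × V => G.dist p.1 p.2 = 2) := by
      simp [hd]
    rw [gMu]
    exact Finset.le_sup
      (f := fun p : V × V => (Finset.univ.filter fun z => G.Adj p.1 z ∧ G.Adj p.2 z).card) hmem
  have hk' : 2 + (gMu G) * (gMu G - 1) ≤ 2 * k := by
    have h2 := two_mul_choose_two (gMu G)
    omega
  have hB := step2 G hconn k hreg htri hdist (gMu G) hm hmu2 hmu hk'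
  have hC : (gBall G p.1 2 ∩ gBall G p.2 2).card ≤ gNs G 2 2 := by
    rw [gNs]
    exact Finset.le_sup
      (f := fun p : V × V => (gBall G p.1 2 ∩ gBall G p.2 2).card)
      (Finset.mem_filter.mpr ⟨Finset.mem_univ p, hdist⟩)
  omega
end

section
/- In the transposition Cayley graph Sym_n(T), for 1 ≤ i ≤ n−1 the sphere S_i of radius i around the identity consists exactly of the permutations of {1,…,n} composed of exactly n − i disjoint cycles (counting fixed points as 1-cycles). Moreover, if y ∈ S_i has exactly h_j cycles of length j for each j (so Σ_j j·h_j = n and Σ_j h_j = n−i), then the number of neighbours of y in S_{i−1} is c_i(y) = (Σ_j j²·h_j − n)/2, the number of neighbours of y in S_i is a_i(y) = 0, and the number of neighbours of y in S_{i+1} is b_i(y) = (n² − Σ_j j²·h_j)/2. -/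
open Finset Equiv
open scoped Classical

/-- The transposition Cayley graph `Sym_n(T)` on the symmetric group of `{1,…,n}`:
vertices are the permutations of `Fin n`, with `x` and `y` adjacent
iff `x⁻¹ * y` is a transposition. -/
def symT (n : ℕ) : SimpleGraph (Equiv.Perm (Fin n)) where
  Adj x y := (x⁻¹ * y).IsSwap
  symm := by
    constructor
    intro x y h
    have hxy : y⁻¹ * x = (x⁻¹ * y)⁻¹ := by group
    obtain ⟨a, b, hab, hswap⟩ := h
    exact ⟨a, b, hab, by rw [hxy, hswap, Equiv.swap_inv]⟩
  loopless := by
    constructor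
    intro x h
    obtain ⟨a, b, hab, hswap⟩ := h
    rw [inv_mul_cancel] at hswap
    have : b = a := by simpa using congrArg (fun f => f.toFun a) hswap.symm
    exact hab this.symm

/-- The number of cycles of a permutation of `Fin n`, counting fixed points as 1-cycles. -/
def cycleCount {n : ℕ} (g : Equiv.Perm (Fin n)) : ℕ :=
  g.cycleType.card + (n - g.support.card)

/-- The number of cycles of length `j` of a permutation of `Fin n`,
counting fixed points as 1-cycles. -/
def numCyclesOfLen {n : ℕ} (g : Equiv.Perm (Fin n)) (j : ℕ) : ℕ :=
  if j = 1 then n - g.support.card else g.cycleType.count j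

namespace Stmt8

lemma mul_card_le_sum (s : Multiset ℕ) (c : ℕ) (h : ∀ x ∈ s, c ≤ x) :
    c * Multiset.card s ≤ s.sum := by
  induction s using Multiset.induction_on with
  | empty => simp
  | cons a s ih =>
    simp only [Multiset.card_cons, Multiset.sum_cons]
    have ha := h a (Multiset.mem_cons_self a s)
    have := ih (fun x hx => h x (Multiset.mem_cons_of_mem hx))
    nlinarith


variable {α : Type*} [Fintype α] [DecidableEq α]
open Equiv.Perm

noncomputable def rl (f : Perm α) : ℕ := f.support.card - Multiset.card f.cycleType

lemma card_cycleType_le (f : Perm α) : Multiset.card f.cycleType ≤ f.support.card := by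
  rw [← Equiv.Perm.sum_cycleType]
  simpa using mul_card_le_sum f.cycleType 1 (fun x hx => Nat.one_le_of_lt (Equiv.Perm.two_le_of_mem_cycleType hx))

lemma rl_eq_zero {f : Perm α} (h : rl f = 0) : f = 1 := by
  have h1 := Equiv.Perm.sum_cycleType f
  have h2 := mul_card_le_sum f.cycleType 2 (fun x hx => Equiv.Perm.two_le_of_mem_cycleType hx)
  have h3 := card_cycleType_le f
  unfold rl at h
  have : Multiset.card f.cycleType = 0 := by omega
  exact cycleType_eq_zero.mp (Multiset.card_eq_zero.mp this)

lemma rl_disjoint {f g : Perm α} (h : Perm.Disjoint f g) : rl (f * g) = rl f + rl g := by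
  have h1 := h.card_support_mul
  have h2 := h.cycleType_mul
  have h3 := card_cycleType_le f
  have h4 := card_cycleType_le g
  unfold rl
  rw [h1, h2]
  simp only [Multiset.card_add]
  omega

lemma rl_cycle {c : Perm α} (hc : c.IsCycle) : rl c + 1 = c.support.card := by
  unfold rl
  rw [hc.cycleType]
  have := hc.two_le_card_support
  simp only [Multiset.card_singleton]
  omega


lemma gc {α : Type*} (L : List α) (i j : ℕ) (hi : i < L.length) (h : i = j) :
    L[i]'hi = L[j]'(h ▸ hi) := by subst h; rfl

lemma fpe {α : Type*} [DecidableEq α] (L : List α) (hL : L.Nodup) (i : ℕ) (h : i + 1 < L.length) :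
    L.formPerm (L[i]'(by omega)) = L[i+1]'h := by
  rw [List.formPerm_apply_getElem L hL i (by omega)]
  exact gc L _ _ (Nat.mod_lt _ (by omega)) (Nat.mod_eq_of_lt h)

lemma fpe0 {α : Type*} [DecidableEq α] (L : List α) (hL : L.Nodup) (i : ℕ) (h : i < L.length)
    (h2 : i + 1 = L.length) : L.formPerm (L[i]'h) = L[0]'(by omega) := by
  rw [List.formPerm_apply_getElem L hL i h]
  exact gc L _ _ (Nat.mod_lt _ (by omega)) (by rw [h2, Nat.mod_self])

lemma formPerm_mul_swap (l : List α) (hl : l.Nodup) (k : ℕ) (hk1 : 1 ≤ k) (hk : k < l.length) :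
    l.formPerm * Equiv.swap (l[0]'(by omega)) (l[k]'hk)
      = ((l[0]'(by omega)) :: l.drop (k+1)).formPerm * ((l.drop 1).take k).formPerm := by
  have hm : 2 ≤ l.length := by omega
  set m := l.length with hmdef
  set a := l[0]'(by omega) with ha
  set b := l[k]'hk with hb
  set l₁ : List α := a :: l.drop (k+1) with hl₁
  set l₂ : List α := (l.drop 1).take k with hl₂
  have len2 : l₂.length = k := by
    simp only [hl₂, List.length_take, List.length_drop]; omega
  have len1 : l₁.length = m - k := by
    simp only [hl₁, List.length_cons, List.length_drop]; omega
  have g2 : ∀ i (h : i < k), l₂[i]'(len2 ▸ h) = l[i+1]'(by omega) := by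
    intro i h
    simp only [hl₂, List.getElem_take, List.getElem_drop]
    exact gc l _ _ (by omega) (by omega)
  have g1 : ∀ i (h : i + 1 < l₁.length), l₁[i+1]'h = l[k+1+i]'(by rw [len1] at h; omega) := by
    intro i h
    simp only [hl₁, List.getElem_cons_succ, List.getElem_drop]
  have nd : ∀ (i j : ℕ) (hi : i < m) (hj : j < m), l[i]'hi = l[j]'hj → i = j := by
    intro i j hi hj hij
    exact (List.Nodup.getElem_inj_iff hl).mp hij
  have mem2 : ∀ (j : ℕ) (hj : j < m), (l[j]'hj ∈ l₂) ↔ (1 ≤ j ∧ j ≤ k) := by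
    intro j hj
    constructor
    · intro hmem
      obtain ⟨i, hi, hieq⟩ := List.mem_iff_getElem.mp hmem
      rw [len2] at hi
      rw [g2 i hi] at hieq
      have := nd _ _ _ _ hieq
      omega
    · intro ⟨h1, h2⟩
      refine List.mem_iff_getElem.mpr ⟨j - 1, by omega, ?_⟩
      rw [g2 (j-1) (by omega)]
      exact gc l _ _ (by omega) (by omega)
  have mem1 : ∀ (j : ℕ) (hj : j < m), (l[j]'hj ∈ l₁) ↔ (j = 0 ∨ k + 1 ≤ j) := by
    intro j hj
    constructor
    · intro hmem
      obtain ⟨i, hi, hieq⟩ := List.mem_iff_getElem.mp hmem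
      match i with
      | 0 =>
        simp only [hl₁, List.getElem_cons_zero] at hieq
        rw [ha] at hieq
        have := nd _ _ _ _ hieq
        omega
      | i + 1 =>
        rw [g1 i hi] at hieq
        have := nd _ _ _ _ hieq
        omega
    · rintro (rfl | h)
      · exact List.mem_cons_self
      · refine List.mem_iff_getElem.mpr ⟨j - k, by rw [len1]; omega, ?_⟩
        have e : l₁[(j-k-1)+1]'(by rw [len1]; omega) = l[j]'hj := by
          rw [g1 (j-k-1) (by rw [len1]; omega)]
          exact gc l _ _ (by omega) (by omega)
        rw [← e]
        exact (gc l₁ _ _ (by rw [len1]; omega) (by omega)).symm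
  have nd1 : l₁.Nodup := by
    refine List.nodup_cons.mpr ⟨?_, hl.sublist (l.drop_sublist (k+1))⟩
    intro hmem
    obtain ⟨i, hi, hieq⟩ := List.mem_iff_getElem.mp hmem
    rw [List.getElem_drop, ha] at hieq
    have hi' : k + 1 + i < m := by
      have := hi
      simp only [List.length_drop] at this
      omega
    have := nd _ _ hi' (by omega) hieq
    omega
  have nd2 : l₂.Nodup := hl.sublist (((l.drop 1).take_sublist k).trans (l.drop_sublist 1))
  have hab : a ≠ b := by
    intro h; rw [ha, hb] at h; have := nd _ _ (by omega) hk h; omega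
  ext x
  simp only [Equiv.Perm.mul_apply]
  by_cases hx : x ∈ l
  case neg =>
    have hxa : x ≠ a := fun h => hx (h ▸ ha ▸ List.getElem_mem _)
    have hxb : x ≠ b := fun h => hx (h ▸ hb ▸ List.getElem_mem _)
    have hx2 : x ∉ l₂ := fun h =>
      hx ((((l.drop 1).take_sublist k).trans (l.drop_sublist 1)).mem h)
    have hx1 : x ∉ l₁ := by
      intro h
      rcases List.mem_cons.mp h with h | h
      · exact hxa h
      · exact hx (l.drop_sublist (k+1) |>.mem h)
    rw [Equiv.swap_apply_of_ne_of_ne hxa hxb, List.formPerm_apply_of_notMem hx,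
      List.formPerm_apply_of_notMem hx2, List.formPerm_apply_of_notMem hx1]
  case pos =>
    obtain ⟨j, hj, rfl⟩ := List.mem_iff_getElem.mp hx
    have hj0 : (0:ℕ) < m := by omega
    have ga : a = l₁[0]'(by rw [len1]; omega) := rfl
    rcases eq_or_ne j 0 with rfl | hjne0
    · -- x = l[0] = a
      have s1 : Equiv.swap a b (l[0]'hj) = b := by rw [← ha]; exact Equiv.swap_apply_left a b
      have h2 : l₂.formPerm (l[0]'hj) = l[0]'hj := by
        refine List.formPerm_apply_of_notMem (fun h => ?_)
        have := (mem2 0 hj0).mp h; omega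
      rw [s1, h2, ← ha, hb, ga]
      rcases eq_or_ne (k+1) m with he | hne
      · rw [fpe0 l hl k hk he, fpe0 l₁ nd1 0 (by rw [len1]; omega) (by rw [len1]; omega)]
        rfl
      · rw [fpe l hl k (by omega), fpe l₁ nd1 0 (by rw [len1]; omega), g1 0 (by rw [len1]; omega)]
    rcases Nat.lt_or_ge j k with hjk | hjk
    · -- 1 ≤ j < k
      have s1 : Equiv.swap a b (l[j]'hj) = l[j]'hj := by
        refine Equiv.swap_apply_of_ne_of_ne (fun h => ?_) (fun h => ?_)
        · rw [ha] at h; exact hjne0 (nd _ _ _ _ h)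
        · rw [hb] at h; have := nd _ _ _ _ h; omega
      have e1 : l₂[j-1]'(by rw [len2]; omega) = l[j]'hj := by
        rw [g2 (j-1) (by omega)]; exact gc l _ _ (by omega) (by omega)
      have h2 : l₂.formPerm (l[j]'hj) = l[j+1]'(by omega) := by
        rw [← e1, fpe l₂ nd2 (j-1) (by rw [len2]; omega)]
        have e2 : l₂[(j-1)+1]'(by rw [len2]; omega) = l₂[j]'(by rw [len2]; omega) :=
          gc l₂ _ _ (by rw [len2]; omega) (by omega)
        rw [e2, g2 j (by omega)]
      have h3 : l₁.formPerm (l[j+1]'(by omega)) = l[j+1]'(by omega) := by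
        refine List.formPerm_apply_of_notMem (fun h => ?_)
        have := (mem1 (j+1) (by omega)).mp h; omega
      rw [s1, fpe l hl j (by omega), h2, h3]
    rcases eq_or_ne j k with rfl | hjk2
    · -- j = k
      have s1 : Equiv.swap a b (l[j]'hj) = a := by rw [← hb]; exact Equiv.swap_apply_right a b
      have e1 : l₂[j-1]'(by rw [len2]; omega) = l[j]'hj := by
        rw [g2 (j-1) (by omega)]; exact gc l _ _ (by omega) (by omega)
      have h2 : l₂.formPerm (l[j]'hj) = l[1]'(by omega) := by
        rw [← e1, fpe0 l₂ nd2 (j-1) (by rw [len2]; omega) (by rw [len2]; omega)]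
        rw [g2 0 (by omega)]
      have h3 : l₁.formPerm (l[1]'(by omega)) = l[1]'(by omega) := by
        refine List.formPerm_apply_of_notMem (fun h => ?_)
        have := (mem1 1 (by omega)).mp h; omega
      rw [s1, h2, h3, ha, fpe l hl 0 (by omega)]
    · -- k < j < m
      have s1 : Equiv.swap a b (l[j]'hj) = l[j]'hj := by
        refine Equiv.swap_apply_of_ne_of_ne (fun h => ?_) (fun h => ?_)
        · rw [ha] at h; exact hjne0 (nd _ _ _ _ h)
        · rw [hb] at h; have := nd _ _ _ _ h; omega
      have h2 : l₂.formPerm (l[j]'hj) = l[j]'hj := by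
        refine List.formPerm_apply_of_notMem (fun h => ?_)
        have := (mem2 j hj).mp h; omega
      have e1 : l₁[(j-k-1)+1]'(by rw [len1]; omega) = l[j]'hj := by
        rw [g1 (j-k-1) (by rw [len1]; omega)]
        exact gc l _ _ (by omega) (by omega)
      rw [s1, h2]
      rcases eq_or_ne (j+1) m with he | hne
      · rw [fpe0 l hl j hj he, ← e1,
          fpe0 l₁ nd1 ((j-k-1)+1) (by rw [len1]; omega) (by rw [len1]; omega)]
        rfl
      · rw [fpe l hl j (by omega), ← e1,
          fpe l₁ nd1 ((j-k-1)+1) (by rw [len1]; omega), g1 ((j-k-1)+1) (by rw [len1]; omega)]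
        exact gc l _ _ (by omega) (by omega)

lemma rl_one : rl (1 : Perm α) = 0 := by simp [rl]

lemma rl_formPerm (l : List α) (hl : l.Nodup) (h1 : 1 ≤ l.length) :
    rl l.formPerm + 1 = l.length := by
  rcases eq_or_lt_of_le h1 with h | h
  · obtain ⟨x, rfl⟩ : ∃ x, l = [x] := by
      match l with
      | [x] => exact ⟨x, rfl⟩
    rw [List.formPerm_singleton, rl_one]
    simp
  · have hcyc := List.isCycle_formPerm hl h
    have := rl_cycle hcyc
    rw [List.support_formPerm_of_nodup l hl (fun x hx => by subst hx; simp at h)] at this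
    rwa [List.toFinset_card_of_nodup hl] at this

lemma rl_formPerm_mul_swap (l : List α) (hl : l.Nodup) (k : ℕ) (hk1 : 1 ≤ k)
    (hk : k < l.length) :
    rl (l.formPerm * Equiv.swap (l[0]'(by omega)) (l[k]'hk)) + 2 = l.length := by
  set a := l[0]'(by omega) with ha
  set l₁ : List α := a :: l.drop (k+1) with hl₁
  set l₂ : List α := (l.drop 1).take k with hl₂
  have nd : ∀ (i j : ℕ) (hi : i < l.length) (hj : j < l.length), l[i]'hi = l[j]'hj → i = j :=
    fun i j hi hj hij => (List.Nodup.getElem_inj_iff hl).mp hij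
  have len2 : l₂.length = k := by
    simp only [hl₂, List.length_take, List.length_drop]; omega
  have len1 : l₁.length = l.length - k := by
    simp only [hl₁, List.length_cons, List.length_drop]; omega
  have nd1 : l₁.Nodup := by
    refine List.nodup_cons.mpr ⟨?_, hl.sublist (l.drop_sublist (k+1))⟩
    intro hmem
    obtain ⟨i, hi, hieq⟩ := List.mem_iff_getElem.mp hmem
    rw [List.getElem_drop, ha] at hieq
    have hi' : k + 1 + i < l.length := by
      have := hi; simp only [List.length_drop] at this; omega
    have := nd _ _ hi' (by omega) hieq
    omega
  have nd2 : l₂.Nodup := hl.sublist (((l.drop 1).take_sublist k).trans (l.drop_sublist 1))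
  have hdisj : ∀ x ∈ l₁, x ∉ l₂ := by
    intro x hx hx2
    obtain ⟨i, hi, hieq⟩ := List.mem_iff_getElem.mp hx2
    rw [len2] at hi
    have e2 : x = l[i+1]'(by omega) := by
      rw [← hieq]
      simp only [hl₂, List.getElem_take, List.getElem_drop]
      exact gc l _ _ (by omega) (by omega)
    rcases List.mem_cons.mp hx with rfl | hx1
    · rw [ha] at e2; have := nd _ _ (by omega) (by omega) e2; omega
    · obtain ⟨i', hi', hieq'⟩ := List.mem_iff_getElem.mp hx1
      rw [List.getElem_drop] at hieq'
      have hi'' : k + 1 + i' < l.length := by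
        have := hi'; simp only [List.length_drop] at this; omega
      rw [← hieq'] at e2
      have := nd _ _ hi'' (by omega) e2
      omega
  have hd : Perm.Disjoint l₁.formPerm l₂.formPerm := by
    intro x
    by_cases hx : x ∈ l₁
    · exact Or.inr (List.formPerm_apply_of_notMem (hdisj x hx))
    · exact Or.inl (List.formPerm_apply_of_notMem hx)
  rw [formPerm_mul_swap l hl k hk1 hk, rl_disjoint hd]
  have e1 := rl_formPerm l₁ nd1 (by rw [len1]; omega)
  have e2 := rl_formPerm l₂ nd2 (by rw [len2]; omega)
  rw [len1] at e1; rw [len2] at e2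
  omega

lemma rl_cycle_swap {c : Perm α} (hc : c.IsCycle) {a b : α} (ha : a ∈ c.support)
    (hb : b ∈ c.support) (hab : a ≠ b) : rl (c * Equiv.swap a b) + 1 = rl c := by
  set l := c.toList a with hldef
  have hnd : l.Nodup := Equiv.Perm.nodup_toList c a
  have hca : c a ≠ a := mem_support.mp ha
  have hceq : c.cycleOf a = c := hc.cycleOf_eq hca
  have hfp : l.formPerm = c := by rw [hldef, Equiv.Perm.formPerm_toList, hceq]
  have hlen : l.length = c.support.card := by
    rw [hldef, Equiv.Perm.length_toList, hceq]
  have hlpos : 0 < l.length := by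
    rw [hlen]; exact lt_of_lt_of_le (by norm_num) hc.two_le_card_support
  have hl0 : l[0]'hlpos = a := by
    have := Equiv.Perm.toList_getElem_zero (p := c) (x := a) ha
    simpa using this
  have hbmem : b ∈ l := Equiv.Perm.mem_toList_iff.mpr
    ⟨hc.sameCycle hca (mem_support.mp hb), ha⟩
  have hk : l.idxOf b < l.length := List.idxOf_lt_length_iff.mpr hbmem
  have hkb : l[l.idxOf b]'hk = b := List.getElem_idxOf hk
  have hk1 : 1 ≤ l.idxOf b := by
    rcases Nat.eq_zero_or_pos (l.idxOf b) with h0 | h0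
    · exfalso; apply hab; rw [← hl0, ← hkb]; exact gc l _ _ hlpos h0.symm
    · exact h0
  have := rl_formPerm_mul_swap l hnd (l.idxOf b) hk1 hk
  rw [hfp, hl0, hkb] at this
  have h2 := rl_cycle hc
  rw [← hlen] at h2
  omega

lemma mem_support_of_sameCycle {y : Perm α} {a b : α} (hab : a ≠ b) (h : y.SameCycle a b) :
    a ∈ y.support := by
  rw [mem_support]
  intro hya
  obtain ⟨i, hi⟩ := h
  exact hab (((zpow_apply_eq_self_of_apply_eq_self hya i).symm.trans hi).symm ▸ rfl)

lemma rl_mul_swap_sameCycle {y : Perm α} {a b : α} (hab : a ≠ b) (h : y.SameCycle a b) :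
    rl (y * Equiv.swap a b) + 1 = rl y := by
  have ha : a ∈ y.support := mem_support_of_sameCycle hab h
  set c := y.cycleOf a with hc
  have hcyc : c.IsCycle := isCycle_cycleOf y (mem_support.mp ha)
  have hmemF : c ∈ y.cycleFactorsFinset := cycleOf_mem_cycleFactorsFinset_iff.mpr ha
  have hd : Perm.Disjoint (y * c⁻¹) c := disjoint_mul_inv_of_mem_cycleFactorsFinset hmemF
  have haC : a ∈ c.support := mem_support_cycleOf_iff.mpr ⟨Equiv.Perm.SameCycle.refl _ _, ha⟩
  have hbC : b ∈ c.support := mem_support_cycleOf_iff.mpr ⟨h, ha⟩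
  have hsub : (c * Equiv.swap a b).support ⊆ c.support := by
    intro x hx
    have hx2 := Equiv.Perm.support_mul_le c (Equiv.swap a b) hx
    rcases Finset.mem_union.mp hx2 with h' | h'
    · exact h'
    · rw [Equiv.Perm.support_swap hab] at h'
      rcases Finset.mem_insert.mp h' with rfl | h''
      · exact haC
      · rw [Finset.mem_singleton.mp h'']; exact hbC
  have hd2 : Perm.Disjoint (y * c⁻¹) (c * Equiv.swap a b) := by
    rw [Equiv.Perm.disjoint_iff_disjoint_support] at hd ⊢
    exact Finset.disjoint_of_subset_right hsub hd
  have e0 : y * Equiv.swap a b = (y * c⁻¹) * (c * Equiv.swap a b) := by group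
  have e1 : rl (y * Equiv.swap a b) = rl (y * c⁻¹) + rl (c * Equiv.swap a b) := by
    rw [e0, rl_disjoint hd2]
  have e2 : rl y = rl (y * c⁻¹) + rl c := by
    nth_rewrite 1 [show y = (y * c⁻¹) * c from by group]
    exact rl_disjoint hd
  have e3 := rl_cycle_swap hcyc haC hbC hab
  omega

lemma sameCycle_mul_swap {y : Perm α} {a b : α} (hab : a ≠ b) (h : ¬ y.SameCycle a b) :
    (y * Equiv.swap a b).SameCycle a b := by
  set z := y * Equiv.swap a b with hz
  have hzb : z b = y a := by
    rw [hz]; simp [Equiv.Perm.mul_apply]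
  by_cases hya : y a = a
  · exact (Equiv.Perm.SameCycle.symm ⟨1, by rw [zpow_one, hzb, hya]⟩)
  · set m := Function.minimalPeriod (⇑y) a with hm
    have hper : Function.IsPeriodicPt (⇑y) (orderOf y) a := by
      rw [Function.IsPeriodicPt, Function.IsFixedPt, ← Equiv.Perm.coe_pow, pow_orderOf_eq_one]
      rfl
    have hmpos : 0 < m := hper.minimalPeriod_pos (orderOf_pos y)
    have hkey : ∀ k, 1 ≤ k → k ≤ m → (z ^ k) b = (y ^ k) a := by
      intro k hk1 hkm
      induction k with
      | zero => omega
      | succ k ih =>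
        rcases Nat.eq_zero_or_pos k with rfl | hkpos
        · rw [pow_one, pow_one, hzb]
        · have hik := ih (by omega) (by omega)
          have hyk : (y ^ k) a ≠ a := by
            intro hcon
            have : Function.IsPeriodicPt (⇑y) k a := by
              rw [Function.IsPeriodicPt, Function.IsFixedPt, ← Equiv.Perm.coe_pow, hcon]
            exact absurd (this.minimalPeriod_le hkpos) (by omega)
          have hykb : (y ^ k) a ≠ b := by
            intro hcon
            exact h ⟨(k : ℤ), by rw [zpow_natCast, hcon]⟩
          rw [pow_succ', Equiv.Perm.mul_apply, hik, hz, Equiv.Perm.mul_apply,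
            Equiv.swap_apply_of_ne_of_ne hyk hykb, ← Equiv.Perm.mul_apply, ← pow_succ']
    have hfin : (z ^ m) b = a := by
      rw [hkey m hmpos le_rfl]
      have hit := Function.iterate_minimalPeriod (f := ⇑y) (x := a)
      rwa [← Equiv.Perm.coe_pow] at hit
    exact (Equiv.Perm.SameCycle.symm ⟨(m : ℤ), by rw [zpow_natCast, hfin]⟩)

lemma rl_mul_swap_not_sameCycle {y : Perm α} {a b : α} (hab : a ≠ b) (h : ¬ y.SameCycle a b) :
    rl (y * Equiv.swap a b) = rl y + 1 := by
  have h2 := sameCycle_mul_swap hab h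
  have h3 := rl_mul_swap_sameCycle hab h2
  rw [mul_assoc] at h3
  simp only [Equiv.swap_mul_self, mul_one] at h3
  omega


lemma rl_swap_mul_le {g : Perm α} {a b : α} (hab : a ≠ b) :
    rl (Equiv.swap a b * g) ≤ rl g + 1 := by
  rw [Equiv.swap_mul_eq_mul_swap]
  have hab' : g⁻¹ a ≠ g⁻¹ b := fun h => hab (g⁻¹.injective h)
  by_cases hsc : g.SameCycle (g⁻¹ a) (g⁻¹ b)
  · have := rl_mul_swap_sameCycle hab' hsc; omega
  · have := rl_mul_swap_not_sameCycle hab' hsc; omega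

lemma exists_walk (n : ℕ) (y : Equiv.Perm (Fin n)) :
    ∃ w : (symT n).Walk 1 y, w.length = rl y := by
  generalize hN : rl y = N
  induction N generalizing y with
  | zero =>
    obtain rfl := rl_eq_zero hN
    exact ⟨SimpleGraph.Walk.nil, rfl⟩
  | succ N ih =>
    have hy1 : y.support.Nonempty := by
      rw [Finset.nonempty_iff_ne_empty, Ne, Equiv.Perm.support_eq_empty_iff]
      intro h
      rw [h, rl_one] at hN
      omega
    obtain ⟨a, ha⟩ := hy1
    have hab : a ≠ y a := (mem_support.mp ha).symm
    have hsc : y.SameCycle a (y a) := ⟨1, by simp⟩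
    have hz := rl_mul_swap_sameCycle hab hsc
    rw [hN] at hz
    obtain ⟨w, hw⟩ := ih (y * Equiv.swap a (y a)) (by omega)
    have hadj : (symT n).Adj (y * Equiv.swap a (y a)) y := by
      show (((y * Equiv.swap a (y a)))⁻¹ * y).IsSwap
      refine ⟨a, y a, hab, ?_⟩
      rw [mul_inv_rev, mul_assoc, inv_mul_cancel, mul_one, Equiv.swap_inv]
    exact ⟨w.concat hadj, by rw [SimpleGraph.Walk.length_concat, hw]⟩

lemma walk_le (n : ℕ) : ∀ {x y : Equiv.Perm (Fin n)} (w : (symT n).Walk x y),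
    rl (x⁻¹ * y) ≤ w.length := by
  intro x y w
  induction w with
  | nil => simp [rl_one]
  | @cons u v z h p ih =>
    obtain ⟨a, b, hab, he⟩ := id (h : (u⁻¹ * v).IsSwap)
    have e : u⁻¹ * z = (u⁻¹ * v) * (v⁻¹ * z) := by group
    rw [SimpleGraph.Walk.length_cons, e, he]
    exact le_trans (rl_swap_mul_le hab) (by omega)

lemma dist_eq (n : ℕ) (y : Equiv.Perm (Fin n)) : (symT n).dist 1 y = rl y := by
  obtain ⟨w, hw⟩ := exists_walk n y
  have h1 : (symT n).dist 1 y ≤ rl y := hw ▸ SimpleGraph.dist_le w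
  have hre : (symT n).Reachable 1 y := ⟨w⟩
  obtain ⟨p, hp⟩ := hre.exists_walk_length_eq_dist
  have h2 : rl y ≤ (symT n).dist 1 y := by
    have := walk_le n p
    rwa [inv_one, one_mul, hp] at this
  omega

lemma swap_eq_swap {a b c d : α} (hab : a ≠ b) (h : Equiv.swap a b = Equiv.swap c d) :
    (a = c ∧ b = d) ∨ (a = d ∧ b = c) := by
  have h1 : Equiv.swap a b c = d := by rw [h]; exact Equiv.swap_apply_left c d
  by_cases hca : c = a
  · subst hca
    rw [Equiv.swap_apply_left] at h1
    exact Or.inl ⟨rfl, h1⟩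
  · by_cases hcb : c = b
    · subst hcb
      rw [Equiv.swap_apply_right] at h1
      exact Or.inr ⟨h1, rfl⟩
    · rw [Equiv.swap_apply_of_ne_of_ne (Ne.symm (fun hh => hca hh.symm))
        (Ne.symm (fun hh => hcb hh.symm))] at h1
      subst h1
      rw [Equiv.swap_self] at h
      have : Equiv.swap a b a = a := by rw [h]; rfl
      rw [Equiv.swap_apply_left] at this
      exact absurd this.symm hab

lemma card_pairs_swaps (s : Finset (Perm α)) (hs : ∀ t ∈ s, t.IsSwap) :
    ((univ ×ˢ univ).filter fun p : α × α => p.1 ≠ p.2 ∧ Equiv.swap p.1 p.2 ∈ s).card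
      = 2 * s.card := by
  rw [Finset.card_eq_sum_card_fiberwise
    (f := fun p : α × α => Equiv.swap p.1 p.2) (t := s)
    (fun p hp => (Finset.mem_filter.mp hp).2.2)]
  rw [Finset.sum_congr rfl (g := fun _ => 2) ?h2, Finset.sum_const, smul_eq_mul, mul_comm]
  case h2 =>
    intro t ht
    obtain ⟨a, b, hab, rfl⟩ := hs t ht
    have heq : (((univ ×ˢ univ).filter fun p : α × α => p.1 ≠ p.2 ∧ Equiv.swap p.1 p.2 ∈ s).filter
        fun p => Equiv.swap p.1 p.2 = Equiv.swap a b) = {(a, b), (b, a)} := by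
      ext p
      simp only [Finset.mem_filter, Finset.mem_insert, Finset.mem_singleton,
        Finset.mem_product, Finset.mem_univ, and_true, true_and]
      constructor
      · rintro ⟨⟨hne, -⟩, heq⟩
        rcases swap_eq_swap hne heq with ⟨h1, h2⟩ | ⟨h1, h2⟩
        · left; exact Prod.ext h1 h2
        · right; exact Prod.ext h1 h2
      · rintro (rfl | rfl)
        · exact ⟨⟨hab, ht⟩, rfl⟩
        · exact ⟨⟨hab.symm, by rwa [Equiv.swap_comm]⟩, Equiv.swap_comm b a⟩
    rw [heq, Finset.card_insert_of_notMem (by simp [Prod.ext_iff]; exact fun h _ => hab h),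
      Finset.card_singleton]

lemma sum_sq_cycleType (f : Perm α) :
    ((univ ×ˢ univ).filter fun p : α × α => p.1 ≠ p.2 ∧ f.SameCycle p.1 p.2).card
        + f.support.card
      = ∑ c ∈ f.cycleFactorsFinset, c.support.card ^ 2 := by
  rw [Finset.card_filter, Finset.sum_product]
  have hinner : ∀ a : α, (∑ b : α, if a ≠ b ∧ f.SameCycle a b then 1 else 0)
      = (univ.filter fun b => a ≠ b ∧ f.SameCycle a b).card :=
    fun a => (Finset.card_filter _ _).symm
  rw [Finset.sum_congr rfl fun a _ => hinner a]
  have step : ∀ a : α, (univ.filter fun b => a ≠ b ∧ f.SameCycle a b).card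
      = (if a ∈ f.support then (f.cycleOf a).support.card - 1 else 0) := by
    intro a
    by_cases ha : a ∈ f.support
    · rw [if_pos ha]
      have heq : (univ.filter fun b => a ≠ b ∧ f.SameCycle a b)
          = (f.cycleOf a).support.erase a := by
        ext b
        simp only [Finset.mem_filter, Finset.mem_univ, true_and, Finset.mem_erase,
          Equiv.Perm.mem_support_cycleOf_iff]
        constructor
        · rintro ⟨h1, h2⟩; exact ⟨h1.symm, h2, ha⟩
        · rintro ⟨h1, h2, -⟩; exact ⟨h1.symm, h2⟩
      rw [heq, Finset.card_erase_of_mem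
        (Equiv.Perm.mem_support_cycleOf_iff.mpr ⟨Equiv.Perm.SameCycle.refl _ _, ha⟩)]
    · rw [if_neg ha, Finset.card_eq_zero, Finset.eq_empty_iff_forall_notMem]
      rintro b hb
      obtain ⟨h1, h2⟩ := Finset.mem_filter.mp hb
      exact ha (mem_support_of_sameCycle h2.1 h2.2)
  rw [Finset.sum_congr rfl (fun a _ => step a), Finset.sum_ite_mem, Finset.univ_inter]
  have hpos : ∀ a ∈ f.support, 1 ≤ (f.cycleOf a).support.card := by
    intro a ha
    rw [Nat.succ_le_iff, Finset.card_pos]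
    exact ⟨a, Equiv.Perm.mem_support_cycleOf_iff.mpr ⟨Equiv.Perm.SameCycle.refl _ _, ha⟩⟩
  have hstep2 : (∑ a ∈ f.support, ((f.cycleOf a).support.card - 1)) + f.support.card
      = ∑ a ∈ f.support, (f.cycleOf a).support.card := by
    nth_rewrite 1 [Finset.card_eq_sum_ones f.support]
    rw [← Finset.sum_add_distrib]
    exact Finset.sum_congr rfl fun a ha => by have := hpos a ha; omega
  rw [hstep2]
  rw [← Finset.sum_fiberwise_of_maps_to
    (g := fun a => f.cycleOf a) (t := f.cycleFactorsFinset)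
    (fun a ha => Equiv.Perm.cycleOf_mem_cycleFactorsFinset_iff.mpr ha)]
  refine Finset.sum_congr rfl fun c hc => ?_
  have hfib : f.support.filter (fun a => f.cycleOf a = c) = c.support := by
    ext a
    simp only [Finset.mem_filter]
    constructor
    · rintro ⟨ha, rfl⟩
      exact Equiv.Perm.mem_support_cycleOf_iff.mpr ⟨Equiv.Perm.SameCycle.refl _ _, ha⟩
    · intro hac
      exact ⟨Equiv.Perm.mem_cycleFactorsFinset_support_le hc hac,
        ((Equiv.Perm.eq_cycleOf_of_mem_cycleFactorsFinset_iff f c hc a).mpr hac).symm⟩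
  rw [hfib]
  have hterm : ∀ a ∈ c.support, (f.cycleOf a).support.card = c.support.card := by
    intro a ha
    rw [← (Equiv.Perm.eq_cycleOf_of_mem_cycleFactorsFinset_iff f c hc a).mpr ha]
  rw [Finset.sum_congr rfl hterm, Finset.sum_const, smul_eq_mul, sq]

lemma sum_range_cycleType (f : Perm α) (N : ℕ) (hN : ∀ j ∈ f.cycleType, j < N) :
    ∑ j ∈ Finset.range N, j ^ 2 * f.cycleType.count j
      = ∑ c ∈ f.cycleFactorsFinset, c.support.card ^ 2 := by
  have h1 : (f.cycleType.map fun j => j ^ 2).sum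
      = ∑ c ∈ f.cycleFactorsFinset, c.support.card ^ 2 := by
    rw [Equiv.Perm.cycleType_def, Multiset.map_map]
    rfl
  rw [← h1, Finset.sum_multiset_map_count]
  rw [Finset.sum_subset (Finset.subset_iff.mpr fun j hj => Finset.mem_range.mpr
    (hN j (Multiset.mem_toFinset.mp hj)))]
  · exact Finset.sum_congr rfl fun j _ => by rw [smul_eq_mul, mul_comm]
  · intro j _ hj
    rw [Multiset.count_eq_zero_of_notMem (fun hm => hj (Multiset.mem_toFinset.mpr hm))]
    simp


end Stmt8

open Stmt8

/-- Lemma 6 of the paper. In `Sym_n(T)`, for `1 ≤ i ≤ n−1` the sphere `S_i`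
around the identity consists exactly of the permutations with exactly `n − i` disjoint cycles
(counting fixed points). Moreover if `y ∈ S_i` has exactly `h_j` cycles of length `j`, then
the number of neighbours of `y` in `S_{i−1}` is `c_i(y) = (Σ_j j²h_j − n)/2`, the number of
neighbours of `y` in `S_i` is `0`, and the number in `S_{i+1}` is `(n² − Σ_j j²h_j)/2`. -/
theorem statement8 (n i : ℕ) (hi1 : 1 ≤ i) (hi2 : i ≤ n - 1) :
    (∀ y : Equiv.Perm (Fin n),
      y ∈ gSphere (symT n) 1 i ↔ cycleCount y = n - i) ∧
    (∀ y ∈ gSphere (symT n) 1 i,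
      (∑ j ∈ Finset.range (n + 1), j ^ 2 * numCyclesOfLen y j)
        = n + 2 * ((gSphere (symT n) 1 (i - 1)).filter fun z => (symT n).Adj y z).card ∧
      ((gSphere (symT n) 1 i).filter fun z => (symT n).Adj y z).card = 0 ∧
      n ^ 2 = (∑ j ∈ Finset.range (n + 1), j ^ 2 * numCyclesOfLen y j)
        + 2 * ((gSphere (symT n) 1 (i + 1)).filter fun z => (symT n).Adj y z).card) := by
  have hn : 1 ≤ n := by omega
  have hmem : ∀ y : Equiv.Perm (Fin n), y ∈ gSphere (symT n) 1 i ↔ rl y = i := by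
    intro y
    rw [gSphere, Finset.mem_filter, dist_eq n y]
    exact ⟨fun h => h.2, fun h => ⟨Finset.mem_univ _, h⟩⟩
  have hsupp_le : ∀ y : Equiv.Perm (Fin n), y.support.card ≤ n := by
    intro y
    simpa using Finset.card_le_univ y.support
  have hcc : ∀ y : Equiv.Perm (Fin n), (rl y = i ↔ cycleCount y = n - i) := by
    intro y
    have h1 := hsupp_le y
    have h2 := card_cycleType_le y
    unfold cycleCount
    unfold rl
    omega
  refine ⟨fun y => (hmem y).trans (hcc y), ?_⟩
  intro y hy
  have hrly : rl y = i := (hmem y).mp hy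
  set W : Finset (Equiv.Perm (Fin n)) := univ.filter (fun t => t.IsSwap) with hW
  set SC : Equiv.Perm (Fin n) → Prop :=
    fun t => ∃ a b : Fin n, a ≠ b ∧ t = Equiv.swap a b ∧ y.SameCycle a b with hSC
  have hbij : ∀ r : ℕ, ((gSphere (symT n) 1 r).filter fun z => (symT n).Adj y z).card
      = (W.filter fun t => rl (y * t) = r).card := by
    intro r
    apply Finset.card_bij (fun z _ => y⁻¹ * z)
    · intro z hz
      rw [gSphere, Finset.filter_filter, Finset.mem_filter] at hz
      obtain ⟨-, hd, hadj⟩ := hz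
      rw [Finset.mem_filter, hW, Finset.mem_filter]
      refine ⟨⟨Finset.mem_univ _, hadj⟩, ?_⟩
      rw [mul_inv_cancel_left, ← dist_eq n z]
      exact hd
    · intro z1 h1 z2 h2 h
      simpa using congrArg (fun t => y * t) h
    · intro t ht
      rw [Finset.mem_filter, hW, Finset.mem_filter] at ht
      obtain ⟨⟨-, hsw⟩, hr⟩ := ht
      refine ⟨y * t, ?_, by rw [inv_mul_cancel_left]⟩
      rw [gSphere, Finset.filter_filter, Finset.mem_filter]
      refine ⟨Finset.mem_univ _, ?_, ?_⟩
      · rw [dist_eq n (y * t)]; exact hr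
      · show ((y⁻¹ * (y * t)).IsSwap)
        rwa [inv_mul_cancel_left]
  have hcase : ∀ t ∈ W, (SC t → rl (y * t) + 1 = i) ∧ (¬ SC t → rl (y * t) = i + 1) := by
    intro t ht
    obtain ⟨a, b, hab, rfl⟩ := (Finset.mem_filter.mp ht).2
    constructor
    · rintro ⟨a', b', hab', heq, hsc⟩
      rw [heq, ← hrly]
      exact rl_mul_swap_sameCycle hab' hsc
    · intro hnsc
      have hnsc2 : ¬ y.SameCycle a b := fun hsc => hnsc ⟨a, b, hab, rfl, hsc⟩
      rw [← hrly]
      exact rl_mul_swap_not_sameCycle hab hnsc2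
  have hfe1 : W.filter (fun t => rl (y * t) = i - 1) = W.filter SC := by
    ext t
    simp only [Finset.mem_filter]
    constructor
    · rintro ⟨ht, hr⟩
      refine ⟨ht, by_contra fun hnot => ?_⟩
      have := (hcase t ht).2 hnot
      omega
    · rintro ⟨ht, hsc⟩
      have := (hcase t ht).1 hsc
      exact ⟨ht, by omega⟩
  have hfe2 : W.filter (fun t => rl (y * t) = i) = ∅ := by
    rw [Finset.eq_empty_iff_forall_notMem]
    intro t ht
    obtain ⟨htW, hr⟩ := Finset.mem_filter.mp ht
    by_cases hsc : SC t
    · have := (hcase t htW).1 hsc; omega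
    · have := (hcase t htW).2 hsc; omega
  have hfe3 : W.filter (fun t => rl (y * t) = i + 1) = W.filter (fun t => ¬ SC t) := by
    ext t
    simp only [Finset.mem_filter]
    constructor
    · rintro ⟨ht, hr⟩
      refine ⟨ht, fun hsc => ?_⟩
      have := (hcase t ht).1 hsc
      omega
    · rintro ⟨ht, hnsc⟩
      exact ⟨ht, (hcase t ht).2 hnsc⟩
  have hQ : ((univ ×ˢ univ).filter fun p : Fin n × Fin n => p.1 ≠ p.2 ∧ y.SameCycle p.1 p.2).card
      = 2 * (W.filter SC).card := by
    rw [← card_pairs_swaps (W.filter SC)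
      (fun t ht => (Finset.mem_filter.mp (Finset.mem_filter.mp ht).1).2)]
    congr 1
    apply Finset.filter_congr
    intro p _
    constructor
    · rintro ⟨hne, hsc⟩
      refine ⟨hne, Finset.mem_filter.mpr ⟨Finset.mem_filter.mpr
        ⟨Finset.mem_univ _, ⟨p.1, p.2, hne, rfl⟩⟩, ⟨p.1, p.2, hne, rfl, hsc⟩⟩⟩
    · rintro ⟨hne, hmem2⟩
      obtain ⟨a', b', hab', heq, hsc⟩ := (Finset.mem_filter.mp hmem2).2
      rcases swap_eq_swap hne heq with ⟨h1, h2⟩ | ⟨h1, h2⟩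
      · exact ⟨hne, h1 ▸ h2 ▸ hsc⟩
      · exact ⟨hne, h1 ▸ h2 ▸ hsc.symm⟩
  have hQA : ((univ ×ˢ univ).filter fun p : Fin n × Fin n => p.1 ≠ p.2).card = 2 * W.card := by
    rw [← card_pairs_swaps W (fun t ht => (Finset.mem_filter.mp ht).2)]
    congr 1
    apply Finset.filter_congr
    intro p _
    constructor
    · intro hne
      exact ⟨hne, Finset.mem_filter.mpr ⟨Finset.mem_univ _, ⟨p.1, p.2, hne, rfl⟩⟩⟩
    · rintro ⟨hne, -⟩
      exact hne
  have hQA2 : ((univ ×ˢ univ).filter fun p : Fin n × Fin n => p.1 ≠ p.2).card + n = n ^ 2 := by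
    rw [Finset.card_filter, Finset.sum_product]
    have hinner : ∀ a : Fin n, (∑ b : Fin n, if a ≠ b then 1 else 0) = n - 1 := by
      intro a
      rw [← Finset.card_filter]
      have : (univ.filter fun b => a ≠ b) = univ.erase a := by
        ext b
        simp [Finset.mem_erase, ne_comm, eq_comm]
      rw [this, Finset.card_erase_of_mem (Finset.mem_univ a), Finset.card_univ, Fintype.card_fin]
    rw [Finset.sum_congr rfl fun a _ => hinner a, Finset.sum_const, Finset.card_univ,
      Fintype.card_fin, smul_eq_mul]
    obtain ⟨m, rfl⟩ : ∃ m, n = m + 1 := ⟨n - 1, by omega⟩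
    simp only [Nat.add_sub_cancel]
    ring
  have hsum : (∑ j ∈ Finset.range (n + 1), j ^ 2 * numCyclesOfLen y j)
      = n + ((univ ×ˢ univ).filter
          fun p : Fin n × Fin n => p.1 ≠ p.2 ∧ y.SameCycle p.1 p.2).card := by
    have hA := sum_sq_cycleType y
    have hB := sum_range_cycleType y (n + 1) (fun j hj => by
      have : j ≤ n := by
        rw [Equiv.Perm.cycleType_def] at hj
        obtain ⟨c, hc, rfl⟩ := Multiset.mem_map.mp hj
        simpa using Finset.card_le_univ c.support
      omega)
    have hsplit : (∑ j ∈ Finset.range (n + 1), j ^ 2 * numCyclesOfLen y j)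
        = (∑ j ∈ Finset.range (n + 1), j ^ 2 * y.cycleType.count j)
          + (n - y.support.card) := by
      have h1mem : (1 : ℕ) ∈ Finset.range (n + 1) := Finset.mem_range.mpr (by omega)
      rw [← Finset.sum_erase_add _ _ h1mem, ← Finset.sum_erase_add _ _ h1mem]
      have hagree : ∀ j ∈ (Finset.range (n + 1)).erase 1,
          j ^ 2 * numCyclesOfLen y j = j ^ 2 * y.cycleType.count j := by
        intro j hj
        rw [numCyclesOfLen, if_neg (Finset.mem_erase.mp hj).1]
      rw [Finset.sum_congr rfl hagree]
      have hc1 : y.cycleType.count 1 = 0 := by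
        rw [Multiset.count_eq_zero]
        intro hmem1
        have := Equiv.Perm.two_le_of_mem_cycleType hmem1
        omega
      rw [numCyclesOfLen, if_pos rfl, hc1]
      ring_nf
    rw [hsplit, hB]
    have := hsupp_le y
    omega

  rw [hbij (i-1), hbij i, hbij (i+1), hfe1, hfe2, hfe3]
  have hWsplit := Finset.card_filter_add_card_filter_not (s := W) (p := SC)
  refine ⟨?_, rfl, ?_⟩
  · rw [hsum, hQ]
  · rw [← hQA2, hsum, hQ]
    omega
end

section
/- For each fixed i ≥ 1 there is a polynomial P of degree 2i in one variable, with leading coefficient 1/(i!·2^i), such that c(n, n−i) = P(n) for all integers n ≥ 2i; its leading term agrees with the leading term of (1/i!)·C(n,2)·C(n−2,2)···C(n−2i+2,2). -/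
open Finset Polynomial
open scoped Classical

/-- `c(n,m)`: the signless Stirling number of the first kind, i.e. the number of
permutations of `{1,…,n}` with exactly `m` cycles (counting fixed points as 1-cycles). -/
noncomputable def stirC (n m : ℕ) : ℕ :=
  (Finset.univ.filter fun g : Equiv.Perm (Fin n) => cycleCount g = m).card

section AuxStir
set_option linter.unusedSectionVars false
open Equiv Equiv.Perm

variable {α : Type*} [Fintype α] [DecidableEq α]

/-- The same-cycle setoid of a permutation. -/
def scSetoid (g : Equiv.Perm α) : Setoid α :=
  ⟨g.SameCycle, ⟨fun x => Equiv.Perm.SameCycle.refl g x, fun h => h.symm, fun h1 h2 => h1.trans h2⟩⟩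

lemma sameCycle_fixed {g : Equiv.Perm α} {x y : α} (hx : g x = x) (h : g.SameCycle x y) :
    y = x := by
  obtain ⟨k, hk⟩ := h
  rw [← hk, Equiv.Perm.zpow_apply_eq_self_of_apply_eq_self hx]

noncomputable def classify (g : Equiv.Perm α) (x : α) :
    {c // c ∈ g.cycleFactorsFinset} ⊕ {x : α // g x = x} :=
  if h : g x = x then Sum.inr ⟨x, h⟩
  else Sum.inl ⟨g.cycleOf x,
    (Equiv.Perm.cycleOf_mem_cycleFactorsFinset_iff).2 (Equiv.Perm.mem_support.2 h)⟩

lemma classify_sound {g : Equiv.Perm α} {x y : α} (h : g.SameCycle x y) :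
    classify g x = classify g y := by
  by_cases hx : g x = x
  · obtain rfl := sameCycle_fixed hx h; rfl
  · have hy : ¬ g y = y := fun hy => hx (by rw [sameCycle_fixed hy h.symm]; exact hy)
    simp only [classify, dif_neg hx, dif_neg hy]
    exact congrArg _ (Subtype.ext h.cycleOf_eq)

noncomputable def classifyQ (g : Equiv.Perm α) :
    Quotient (scSetoid g) → ({c // c ∈ g.cycleFactorsFinset} ⊕ {x : α // g x = x}) :=
  Quotient.lift (classify g) (fun _ _ h => classify_sound h)

lemma classifyQ_bijective (g : Equiv.Perm α) : Function.Bijective (classifyQ g) := by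
  constructor
  · intro u v
    refine Quotient.inductionOn₂ u v (fun x y h => Quotient.sound ?_)
    simp only [classifyQ, Quotient.lift_mk] at h
    unfold classify at h
    by_cases hx : g x = x
    · by_cases hy : g y = y
      · rw [dif_pos hx, dif_pos hy] at h
        obtain rfl : x = y := Subtype.ext_iff.1 (Sum.inr.inj h)
        exact Equiv.Perm.SameCycle.refl g x
      · rw [dif_pos hx, dif_neg hy] at h; exact absurd h (by simp)
    · by_cases hy : g y = y
      · rw [dif_neg hx, dif_pos hy] at h; exact absurd h (by simp)
      · rw [dif_neg hx, dif_neg hy] at h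
        have hco : g.cycleOf x = g.cycleOf y := Subtype.ext_iff.1 (Sum.inl.inj h)
        have hy' : y ∈ (g.cycleOf y).support :=
          Equiv.Perm.mem_support_cycleOf_iff.2
            ⟨Equiv.Perm.SameCycle.refl g y, Equiv.Perm.mem_support.2 hy⟩
        rw [← hco] at hy'
        exact (Equiv.Perm.mem_support_cycleOf_iff.1 hy').1
  · rintro (⟨c, hc⟩ | ⟨x, hx⟩)
    · have hcyc : c.IsCycle := (Equiv.Perm.mem_cycleFactorsFinset_iff.1 hc).1
      obtain ⟨x, hxc⟩ := hcyc.nonempty_support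
      have hgx : ¬ g x = x := by
        have h1 := (Equiv.Perm.mem_cycleFactorsFinset_iff.1 hc).2 x hxc
        exact fun h => (Equiv.Perm.mem_support.1 hxc) (h1.trans h)
      refine ⟨Quotient.mk _ x, ?_⟩
      simp only [classifyQ, Quotient.lift_mk, classify, dif_neg hgx]
      exact congrArg _ (Subtype.ext (Equiv.Perm.cycle_is_cycleOf hxc hc).symm)
    · exact ⟨Quotient.mk _ x, by simp only [classifyQ, Quotient.lift_mk, classify, dif_pos hx]⟩

lemma card_quot_eq (g : Equiv.Perm α) :
    Nat.card (Quotient (scSetoid g)) =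
      g.cycleType.card + (Fintype.card α - g.support.card) := by
  rw [Nat.card_eq_of_bijective _ (classifyQ_bijective g), Nat.card_sum]
  congr 1
  · rw [Nat.card_eq_fintype_card, Fintype.card_coe, Equiv.Perm.cycleType_def,
      Multiset.card_map]
    rfl
  · rw [Nat.card_eq_fintype_card, Fintype.card_subtype]
    have : (univ.filter fun x => g x = x) = g.supportᶜ := by
      ext x; simp [Equiv.Perm.mem_support]
    rw [this, Finset.card_compl]

section Decompose

variable {n : ℕ}

lemma sc_apply (g : Equiv.Perm α) (x : α) : g.SameCycle x (g x) := ⟨1, by simp⟩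

lemma sc_of_pow {g : Equiv.Perm α} {x y : α} {k : ℕ} (h : (g ^ k) x = y) : g.SameCycle x y :=
  ⟨(k : ℤ), by rw [zpow_natCast]; exact h⟩

/-- `σ = decomposeFin.symm (0, e)` fixes `0` and acts as `e` on successors. -/
lemma sigma0_zero (e : Equiv.Perm (Fin n)) :
    Equiv.Perm.decomposeFin.symm ((0 : Fin (n+1)), e) 0 = 0 :=
  Equiv.Perm.decomposeFin_symm_apply_zero 0 e

lemma sigma0_succ (e : Equiv.Perm (Fin n)) (x : Fin n) :
    Equiv.Perm.decomposeFin.symm ((0 : Fin (n+1)), e) x.succ = (e x).succ := by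
  rw [Equiv.Perm.decomposeFin_symm_apply_succ, Equiv.swap_self]; rfl

lemma sigma0_pow_succ (e : Equiv.Perm (Fin n)) (k : ℕ) (x : Fin n) :
    (Equiv.Perm.decomposeFin.symm ((0 : Fin (n+1)), e) ^ k) x.succ = ((e ^ k) x).succ := by
  induction k with
  | zero => simp
  | succ k ih =>
      rw [pow_succ', pow_succ', Equiv.Perm.mul_apply, Equiv.Perm.mul_apply, ih, sigma0_succ]

lemma card_quot_decompose_zero (e : Equiv.Perm (Fin n)) :
    Nat.card (Quotient (scSetoid (Equiv.Perm.decomposeFin.symm ((0 : Fin (n+1)), e)))) =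
      Nat.card (Quotient (scSetoid e)) + 1 := by
  set σ := Equiv.Perm.decomposeFin.symm ((0 : Fin (n+1)), e) with hσ
  -- classification map
  have hsc : ∀ {x y : Fin n}, σ.SameCycle x.succ y.succ → e.SameCycle x y := by
    intro x y h
    obtain ⟨i, _, hi⟩ := h.exists_pow_eq'
    rw [sigma0_pow_succ] at hi
    exact sc_of_pow (Fin.succ_injective n hi)
  have hsc' : ∀ {x y : Fin n}, e.SameCycle x y → σ.SameCycle x.succ y.succ := by
    intro x y h
    obtain ⟨i, _, hi⟩ := h.exists_pow_eq'
    exact sc_of_pow (by rw [sigma0_pow_succ, hi])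
  let f : Fin (n+1) → (Quotient (scSetoid e)) ⊕ PUnit.{1} :=
    fun u => Fin.cases (Sum.inr PUnit.unit) (fun x => Sum.inl (Quotient.mk _ x)) u
  have hwd : ∀ (u v : Fin n.succ), σ.SameCycle u v → f u = f v := by
    intro u v h
    induction u using Fin.cases with
    | zero => obtain rfl := sameCycle_fixed (sigma0_zero e) h; rfl
    | succ x =>
        induction v using Fin.cases with
        | zero =>
            exact absurd (sameCycle_fixed (sigma0_zero e) h.symm) (Fin.succ_ne_zero x)
        | succ y =>
            simp only [f, Fin.cases_succ]
            exact congrArg _ (Quotient.sound (hsc h))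
  let F : Quotient (scSetoid σ) → (Quotient (scSetoid e)) ⊕ PUnit.{1} :=
    Quotient.lift f hwd
  have hbij : Function.Bijective F := by
    constructor
    · intro u v
      refine Quotient.inductionOn₂ u v (fun x y h => Quotient.sound ?_)
      simp only [F, Quotient.lift_mk] at h
      induction x using Fin.cases with
      | zero =>
          induction y using Fin.cases with
          | zero => exact Equiv.Perm.SameCycle.refl σ 0
          | succ y => exact absurd h Sum.inr_ne_inl
      | succ x =>
          induction y using Fin.cases with
          | zero => exact absurd h Sum.inl_ne_inr
          | succ y =>
              simp only [f, Fin.cases_succ] at h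
              exact hsc' (Quotient.exact (Sum.inl.inj h))
    · rintro (q | ⟨⟩)
      · refine Quotient.inductionOn q (fun x => ⟨Quotient.mk _ x.succ, ?_⟩)
        simp [F, f]
        rfl
      · exact ⟨Quotient.mk _ 0, rfl⟩
  rw [Nat.card_eq_of_bijective _ hbij, Nat.card_sum]
  simp

end Decompose

section DecomposeNe

variable {n : ℕ}

lemma sigmap_succ (e : Equiv.Perm (Fin n)) {p : Fin (n+1)} (hp : p ≠ 0) (x : Fin n) :
    Equiv.Perm.decomposeFin.symm (p, e) x.succ =
      if e x = p.pred hp then 0 else (e x).succ := by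
  rw [Equiv.Perm.decomposeFin_symm_apply_succ, Equiv.swap_apply_def]
  rcases eq_or_ne (e x) (p.pred hp) with h | h
  · rw [if_neg (Fin.succ_ne_zero (e x)), if_pos (by rw [h, Fin.succ_pred]), if_pos h]
  · have hne : (e x).succ ≠ p := fun hc => h (by simp [← hc])
    rw [if_neg (Fin.succ_ne_zero (e x)), if_neg hne, if_neg h]

lemma card_quot_decompose_ne (e : Equiv.Perm (Fin n)) {p : Fin (n+1)} (hp : p ≠ 0) :
    Nat.card (Quotient (scSetoid (Equiv.Perm.decomposeFin.symm (p, e)))) =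
      Nat.card (Quotient (scSetoid e)) := by
  set σ := Equiv.Perm.decomposeFin.symm (p, e) with hσdef
  set q : Fin n := p.pred hp with hq
  have hσ0 : σ 0 = q.succ := by
    rw [hσdef, Equiv.Perm.decomposeFin_symm_apply_zero, hq, Fin.succ_pred]
  have hσsucc : ∀ x, σ x.succ = if e x = q then 0 else (e x).succ := fun x => sigmap_succ e hp x
  let proj : Fin (n+1) → Fin n := fun u => Fin.cases q (fun x => x) u
  -- step lemma
  have s1 : ∀ u, e.SameCycle (proj u) (proj (σ u)) := by
    intro u
    induction u using Fin.cases with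
    | zero =>
        rw [hσ0]; simp only [proj, Fin.cases_zero, Fin.cases_succ]
        exact Equiv.Perm.SameCycle.refl e q
    | succ x =>
        rw [hσsucc x]
        rcases eq_or_ne (e x) q with h | h
        · rw [if_pos h]
          simp only [proj, Fin.cases_zero, Fin.cases_succ]
          rw [← h]; exact sc_apply e x
        · rw [if_neg h]
          simp only [proj, Fin.cases_succ]
          exact sc_apply e x
  have s2 : ∀ (k : ℕ) (u : Fin (n+1)), e.SameCycle (proj u) (proj ((σ ^ k) u)) := by
    intro k
    induction k with
    | zero =>
        intro u; simp only [pow_zero, Equiv.Perm.one_apply]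
        exact Equiv.Perm.SameCycle.refl e (proj u)
    | succ k ih =>
        intro u
        rw [pow_succ', Equiv.Perm.mul_apply]
        exact (ih u).trans (s1 ((σ ^ k) u))
  have c1 : ∀ {u v : Fin (n+1)}, σ.SameCycle u v → e.SameCycle (proj u) (proj v) := by
    intro u v h
    obtain ⟨i, _, hi⟩ := h.exists_pow_eq'
    rw [← hi]; exact s2 i u
  -- reverse direction
  have t1 : ∀ x : Fin n, σ.SameCycle x.succ (e x).succ := by
    intro x
    rcases eq_or_ne (e x) q with h | h
    · have h1 : σ x.succ = 0 := by rw [hσsucc x, if_pos h]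
      have h2 : σ (0 : Fin (n+1)) = (e x).succ := by rw [hσ0, h]
      have ha : σ.SameCycle x.succ 0 := by have := sc_apply σ x.succ; rwa [h1] at this
      have hb : σ.SameCycle 0 (e x).succ := by have := sc_apply σ 0; rwa [h2] at this
      exact ha.trans hb
    · have h1 : σ x.succ = (e x).succ := by rw [hσsucc x, if_neg h]
      have := sc_apply σ x.succ
      rw [h1] at this; exact this
  have t2 : ∀ (k : ℕ) (x : Fin n), σ.SameCycle x.succ (((e ^ k) x)).succ := by
    intro k
    induction k with
    | zero => intro x; simp only [pow_zero]; exact Equiv.Perm.SameCycle.refl σ x.succ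
    | succ k ih =>
        intro x
        rw [pow_succ, Equiv.Perm.mul_apply]
        exact (t1 x).trans (ih (e x))
  have c2 : ∀ {x y : Fin n}, e.SameCycle x y → σ.SameCycle x.succ y.succ := by
    intro x y h
    obtain ⟨i, _, hi⟩ := h.exists_pow_eq'
    rw [← hi]; exact t2 i x
  have c3 : σ.SameCycle 0 q.succ := by
    have := sc_apply σ 0; rw [hσ0] at this; exact this
  have cproj : ∀ u : Fin (n+1), σ.SameCycle u (proj u).succ := by
    intro u
    induction u using Fin.cases with
    | zero => simp only [proj, Fin.cases_zero]; exact c3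
    | succ x => simp only [proj, Fin.cases_succ]; exact Equiv.Perm.SameCycle.refl σ x.succ
  let F : Quotient (scSetoid σ) → Quotient (scSetoid e) :=
    Quotient.lift (fun u => Quotient.mk _ (proj u)) (fun u v h => Quotient.sound (c1 h))
  have hbij : Function.Bijective F := by
    constructor
    · intro u v
      refine Quotient.inductionOn₂ u v (fun x y h => Quotient.sound ?_)
      simp only [F, Quotient.lift_mk] at h
      exact (cproj x).trans ((c2 (Quotient.exact h)).trans (cproj y).symm)
    · refine fun w => Quotient.inductionOn w (fun x => ⟨Quotient.mk _ x.succ, ?_⟩)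
      simp only [F, Quotient.lift_mk, proj, Fin.cases_succ]
  exact Nat.card_eq_of_bijective F hbij

end DecomposeNe

lemma cycleCount_eq_card_quot {n : ℕ} (g : Equiv.Perm (Fin n)) :
    cycleCount g = Nat.card (Quotient (scSetoid g)) := by
  rw [card_quot_eq, cycleCount, Fintype.card_fin]

lemma cycleCount_decompose {n : ℕ} (p : Fin (n+1)) (e : Equiv.Perm (Fin n)) :
    cycleCount (Equiv.Perm.decomposeFin.symm (p, e)) =
      cycleCount e + (if p = 0 then 1 else 0) := by
  rw [cycleCount_eq_card_quot, cycleCount_eq_card_quot]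
  rcases eq_or_ne p 0 with rfl | hp
  · rw [if_pos rfl, card_quot_decompose_zero]
  · rw [if_neg hp, card_quot_decompose_ne e hp, add_zero]

lemma stirC_recurrence (n m : ℕ) :
    stirC (n + 1) (m + 1) = stirC n m + n * stirC n (m + 1) := by
  classical
  have hcard : stirC (n+1) (m+1) =
      (Finset.univ.filter fun pe : Fin (n+1) × Equiv.Perm (Fin n) =>
        cycleCount (Equiv.Perm.decomposeFin.symm pe) = m + 1).card := by
    rw [stirC]
    apply Finset.card_bij (fun σ _ => Equiv.Perm.decomposeFin σ)
    · intro σ hσ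
      simp only [Finset.mem_filter, Finset.mem_univ, true_and] at hσ ⊢
      rw [Equiv.symm_apply_apply]; exact hσ
    · intro a ha b hb hab
      exact Equiv.Perm.decomposeFin.injective hab
    · intro pe hpe
      refine ⟨Equiv.Perm.decomposeFin.symm pe, ?_, by simp⟩
      simp only [Finset.mem_filter, Finset.mem_univ, true_and] at hpe ⊢
      exact hpe
  rw [hcard]
  rw [Finset.card_eq_sum_card_fiberwise (f := Prod.fst) (t := Finset.univ) (fun x _ => Finset.mem_univ _)]
  have hfib : ∀ p : Fin (n+1),
      ((Finset.univ.filter fun pe : Fin (n+1) × Equiv.Perm (Fin n) =>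
        cycleCount (Equiv.Perm.decomposeFin.symm pe) = m + 1).filter
          fun pe => pe.1 = p).card
      = (Finset.univ.filter fun e : Equiv.Perm (Fin n) =>
          cycleCount e + (if p = 0 then 1 else 0) = m + 1).card := by
    intro p
    apply Finset.card_bij (fun pe _ => pe.2)
    · intro pe hpe
      simp only [Finset.mem_filter, Finset.mem_univ, true_and] at hpe ⊢
      obtain ⟨h1, h2⟩ := hpe
      rw [← h2, ← cycleCount_decompose pe.1 pe.2]
      exact h1
    · intro a ha b hb hab
      simp only [Finset.mem_filter] at ha hb
      have : a.1 = b.1 := ha.2.trans hb.2.symm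
      exact Prod.ext this hab
    · intro e he
      refine ⟨(p, e), ?_, rfl⟩
      simp only [Finset.mem_filter, Finset.mem_univ, true_and] at he ⊢
      simp [cycleCount_decompose p e, he]
  calc (∑ p : Fin (n+1), ((Finset.univ.filter fun pe : Fin (n+1) × Equiv.Perm (Fin n) =>
        cycleCount (Equiv.Perm.decomposeFin.symm pe) = m + 1).filter fun pe => pe.1 = p).card)
      = ∑ p : Fin (n+1), (Finset.univ.filter fun e : Equiv.Perm (Fin n) =>
          cycleCount e + (if p = 0 then 1 else 0) = m + 1).card := by
        exact Finset.sum_congr rfl (fun p _ => hfib p)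
    _ = stirC n m + n * stirC n (m + 1) := by
        rw [← Finset.sum_erase_add _ _ (Finset.mem_univ (0 : Fin (n+1)))]
        have h0 : (Finset.univ.filter fun e : Equiv.Perm (Fin n) =>
            cycleCount e + (if (0:Fin (n+1)) = 0 then 1 else 0) = m + 1).card = stirC n m := by
          rw [stirC]; congr 1; ext e; simp
        have hne : ∀ p ∈ (Finset.univ : Finset (Fin (n+1))).erase 0,
            (Finset.univ.filter fun e : Equiv.Perm (Fin n) =>
              cycleCount e + (if p = 0 then 1 else 0) = m + 1).card = stirC n (m+1) := by
          intro p hp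
          rw [Finset.mem_erase] at hp
          rw [stirC]; congr 1; ext e; simp [hp.1]
        rw [Finset.sum_congr rfl hne, Finset.sum_const, h0, smul_eq_mul,
          Finset.card_erase_of_mem (Finset.mem_univ _), Finset.card_univ, Fintype.card_fin]
        simp [add_comm]

lemma stirC_self (n : ℕ) : stirC n n = 1 := by
  classical
  rw [stirC]
  have : (Finset.univ.filter fun g : Equiv.Perm (Fin n) => cycleCount g = n) = {1} := by
    ext g
    simp only [Finset.mem_filter, Finset.mem_univ, true_and, Finset.mem_singleton]
    constructor
    · intro h
      rw [cycleCount] at h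
      have hsup : g.support.card ≤ n := by
        simpa using Finset.card_le_univ g.support
      have h2 : 2 * g.cycleType.card ≤ g.support.card := by
        rw [← Equiv.Perm.sum_cycleType]
        calc 2 * g.cycleType.card = g.cycleType.card * 2 := by ring
        _ ≤ g.cycleType.sum := Multiset.card_nsmul_le_sum (fun x hx => Equiv.Perm.two_le_of_mem_cycleType hx)
      have hct : g.cycleType.card = g.support.card := by omega
      have : g.support.card = 0 := by omega
      exact Equiv.Perm.support_eq_empty_iff.1 (Finset.card_eq_zero.1 this)
    · rintro rfl
      simp [cycleCount]
  rw [this, Finset.card_singleton]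

lemma telescope_prod (d : ℕ) (x : ℚ) :
    (∏ j ∈ Finset.range (d + 1), (x + 1 - (j : ℚ))) -
      (∏ j ∈ Finset.range (d + 1), (x - (j : ℚ))) =
    ((d : ℚ) + 1) * ∏ j ∈ Finset.range d, (x - (j : ℚ)) := by
  have h1 : (∏ j ∈ Finset.range (d + 1), (x + 1 - (j : ℚ)))
      = (∏ j ∈ Finset.range d, (x - (j : ℚ))) * (x + 1) := by
    rw [Finset.prod_range_succ']
    congr 1
    · apply Finset.prod_congr rfl
      intro j _
      push_cast; ring
    · norm_num
  rw [h1, Finset.prod_range_succ]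
  push_cast; ring

lemma antideriv : ∀ (d : ℕ) (q : Polynomial ℚ), q.natDegree ≤ d →
    ∃ P : Polynomial ℚ, (∀ x : ℚ, P.eval (x + 1) - P.eval x = q.eval x) ∧
      P.natDegree ≤ d + 1 ∧
      (q ≠ 0 → P.natDegree = q.natDegree + 1 ∧
        P.leadingCoeff = q.leadingCoeff / ((q.natDegree : ℚ) + 1)) := by
  intro d
  induction d with
  | zero =>
      intro q hq
      refine ⟨Polynomial.C (q.coeff 0) * Polynomial.X, ?_, ?_, ?_⟩
      · intro x
        rw [eq_C_of_natDegree_le_zero hq]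
        simp; ring
      · rcases eq_or_ne (q.coeff 0) 0 with h | h
        · simp [h]
        · rw [natDegree_C_mul_X _ h]
      · intro hq0
        have hd0 : q.natDegree = 0 := Nat.le_zero.1 hq
        have ha : q.coeff 0 ≠ 0 := by
          intro h
          exact hq0 (by rw [eq_C_of_natDegree_le_zero hq, h, map_zero])
        constructor
        · rw [natDegree_C_mul_X _ ha, hd0]
        · have hql : q.leadingCoeff = q.coeff 0 := by rw [leadingCoeff, hd0]
          rw [hql, hd0, leadingCoeff, natDegree_C_mul_X _ ha, coeff_C_mul, coeff_X_one, mul_one]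
          norm_num
  | succ d ih =>
      intro q hq
      by_cases hled : q.natDegree ≤ d
      · obtain ⟨P, h1, h2, h3⟩ := ih q hled
        exact ⟨P, h1, h2.trans (by omega), h3⟩
      · have hd : q.natDegree = d + 1 := le_antisymm hq (not_le.1 hled)
        have hq0 : q ≠ 0 := fun h => hled (by simp [h])
        set c := q.leadingCoeff with hc
        have hc0 : c ≠ 0 := leadingCoeff_ne_zero.2 hq0
        set N : Polynomial ℚ := ∏ j ∈ Finset.range (d + 1), (Polynomial.X - Polynomial.C (j : ℚ)) with hN
        set M : Polynomial ℚ := ∏ j ∈ Finset.range (d + 2), (Polynomial.X - Polynomial.C (j : ℚ)) with hM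
        have hNmonic : N.Monic := monic_prod_of_monic _ _ (fun j _ => monic_X_sub_C _)
        have hMmonic : M.Monic := monic_prod_of_monic _ _ (fun j _ => monic_X_sub_C _)
        have hNdeg : N.natDegree = d + 1 := by
          rw [hN, natDegree_prod _ _ (fun j _ => X_sub_C_ne_zero _)]
          simp only [natDegree_X_sub_C, Finset.sum_const, smul_eq_mul, Finset.card_range, mul_one]
        have hMdeg : M.natDegree = d + 2 := by
          rw [hM, natDegree_prod _ _ (fun j _ => X_sub_C_ne_zero _)]
          simp only [natDegree_X_sub_C, Finset.sum_const, smul_eq_mul, Finset.card_range, mul_one]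
        set F : Polynomial ℚ := Polynomial.C (c / ((d : ℚ) + 2)) * M with hF
        have hd2 : ((d : ℚ) + 2) ≠ 0 := by positivity
        have hFdiff : ∀ x : ℚ, F.eval (x + 1) - F.eval x
            = c * ∏ j ∈ Finset.range (d + 1), (x - (j : ℚ)) := by
          intro x
          rw [hF]
          simp only [eval_mul, eval_C, hM, eval_prod, eval_sub, eval_X]
          rw [← mul_sub]
          have ht := telescope_prod (d + 1) x
          push_cast at ht ⊢
          rw [ht]
          field_simp
          ring
        set r : Polynomial ℚ := q - Polynomial.C c * N with hr
        have hrdeg : r.natDegree ≤ d := by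
          rw [natDegree_le_iff_coeff_eq_zero]
          intro m hm
          rcases eq_or_lt_of_le (Nat.succ_le_of_lt hm) with h | h
          · rw [hr, coeff_sub, coeff_C_mul, ← h]
            have h1 : q.coeff (d + 1) = c := by rw [hc, ← hd]; rfl
            have h2 : N.coeff (d + 1) = 1 := by
              have := hNmonic.coeff_natDegree
              rwa [hNdeg] at this
            rw [h1, h2, mul_one, sub_self]
          · rw [hr, coeff_sub, coeff_C_mul]
            have hq1 : q.coeff m = 0 := coeff_eq_zero_of_natDegree_lt (by omega)
            have hN1 : N.coeff m = 0 := coeff_eq_zero_of_natDegree_lt (by omega)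
            rw [hq1, hN1, mul_zero, sub_self]
        obtain ⟨G, hGdiff, hGsmall, _⟩ := ih r hrdeg
        refine ⟨F + G, ?_, ?_, ?_⟩
        · intro x
          have hqsplit : q.eval x = r.eval x + c * ∏ j ∈ Finset.range (d + 1), (x - (j : ℚ)) := by
            rw [hr]
            simp only [eval_sub, eval_mul, eval_C, hN, eval_prod, eval_sub, eval_X]
            ring
          rw [hqsplit, ← hFdiff x, ← hGdiff x]
          simp only [eval_add]
          ring
        · refine (natDegree_add_le _ _).trans ?_
          have hFd : F.natDegree = d + 2 := by
            rw [hF, natDegree_C_mul (by positivity), hMdeg]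
          omega
        · intro _
          have hFd : F.natDegree = d + 2 := by
            rw [hF, natDegree_C_mul (by positivity), hMdeg]
          have hcoeff : (F + G).coeff (d + 2) = c / ((d : ℚ) + 2) := by
            rw [coeff_add, hF, coeff_C_mul]
            have hMc : M.coeff (d + 2) = 1 := by
              have := hMmonic.coeff_natDegree
              rwa [hMdeg] at this
            have hGc : G.coeff (d + 2) = 0 := coeff_eq_zero_of_natDegree_lt (by omega)
            rw [hMc, hGc, mul_one, add_zero]
          have hcne : c / ((d : ℚ) + 2) ≠ 0 := div_ne_zero hc0 hd2
          have hdegFG : (F + G).natDegree = d + 2 := by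
            refine le_antisymm ?_ (le_natDegree_of_ne_zero (by rw [hcoeff]; exact hcne))
            refine (natDegree_add_le _ _).trans ?_
            omega
          constructor
          · omega
          · rw [leadingCoeff, hdegFG, hcoeff, hd]
            push_cast
            ring_nf

lemma keyPoly (i : ℕ) : ∃ P : Polynomial ℚ, P.natDegree = 2 * i ∧
    P.leadingCoeff = 1 / ((i.factorial : ℚ) * 2 ^ i) ∧
    ∀ n : ℕ, 2 * i ≤ n → (stirC n (n - i) : ℚ) = P.eval (n : ℚ) := by
  induction i with
  | zero =>
      refine ⟨1, by simp, by simp, ?_⟩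
      intro n _
      simp [stirC_self n]
  | succ i ih =>
      obtain ⟨P, hdeg, hlead, hval⟩ := ih
      have hlead0 : P.leadingCoeff ≠ 0 := by
        rw [hlead]
        positivity
      have hP0 : P ≠ 0 := fun h => hlead0 (by simp [h])
      set q : Polynomial ℚ := Polynomial.X * P with hqdef
      have hq0 : q ≠ 0 := mul_ne_zero X_ne_zero hP0
      have hqdeg : q.natDegree = 2 * i + 1 := by
        rw [hqdef, natDegree_mul X_ne_zero hP0, natDegree_X, hdeg]; omega
      have hqlead : q.leadingCoeff = P.leadingCoeff := by
        rw [hqdef, leadingCoeff_mul, leadingCoeff_X, one_mul]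
      obtain ⟨F, hFdiff, _, hFprop⟩ := antideriv (2 * i + 1) q (le_of_eq hqdeg)
      obtain ⟨hFdeg, hFlead⟩ := hFprop hq0
      set n0 : ℕ := 2 * (i + 1) with hn0
      set P' : Polynomial ℚ := F + Polynomial.C ((stirC n0 (n0 - (i+1)) : ℚ) - F.eval (n0 : ℚ)) with hP'
      have hFdeg' : F.natDegree = 2 * (i + 1) := by omega
      have hP'deg : P'.natDegree = 2 * (i + 1) := by
        rw [hP', natDegree_add_C, hFdeg']
      refine ⟨P', hP'deg, ?_, ?_⟩
      · have hcoeff : P'.leadingCoeff = F.leadingCoeff := by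
          rw [leadingCoeff, hP'deg, hP', coeff_add, coeff_C,
            if_neg (by omega : ¬ 2 * (i + 1) = 0), add_zero, leadingCoeff, hFdeg']
        rw [hcoeff, hFlead, hqlead, hlead, hqdeg]
        rw [Nat.factorial_succ]
        push_cast
        field_simp
        ring
      · intro n hn
        induction n, hn using Nat.le_induction with
        | base =>
            rw [hP']
            simp only [eval_add, eval_C]
            push_cast
            ring
        | succ n hn ihn =>
            have hdiff : P'.eval ((n : ℚ) + 1) - P'.eval (n : ℚ) = q.eval (n : ℚ) := by
              rw [hP']
              simp only [eval_add, eval_C]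
              have := hFdiff (n : ℚ)
              linarith [hFdiff (n : ℚ)]
            have hqev : q.eval (n : ℚ) = (n : ℚ) * P.eval (n : ℚ) := by
              rw [hqdef]; simp
            have hPn : (stirC n (n - i) : ℚ) = P.eval (n : ℚ) := hval n (by omega)
            have hrec : stirC (n + 1) (n - i) = stirC n (n - (i + 1)) + n * stirC n (n - i) := by
              have hni : n - i = (n - (i + 1)) + 1 := by omega
              rw [hni, stirC_recurrence n (n - (i + 1)), ← hni]
            have hsub : (n + 1) - (i + 1) = n - i := by omega
            rw [hsub]
            push_cast [hrec]
            push_cast at ihn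
            rw [ihn, hPn]
            push_cast at hdiff
            linarith [hdiff, hqev]

lemma prodPoly_deg (i : ℕ) :
    (Polynomial.C ((i.factorial : ℚ))⁻¹ * ∏ j ∈ Finset.range i,
      ((Polynomial.X - Polynomial.C (2 * j : ℚ))
        * (Polynomial.X - Polynomial.C (2 * j + 1 : ℚ)) * Polynomial.C (2⁻¹ : ℚ))).natDegree
      = 2 * i := by
  have hfact : ((i.factorial : ℚ))⁻¹ ≠ 0 := by positivity
  have hfne : ∀ j ∈ Finset.range i, ((Polynomial.X - Polynomial.C (2 * j : ℚ))
      * (Polynomial.X - Polynomial.C (2 * j + 1 : ℚ)) * Polynomial.C (2⁻¹ : ℚ)) ≠ 0 := by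
    intro j _
    apply mul_ne_zero (mul_ne_zero (X_sub_C_ne_zero _) (X_sub_C_ne_zero _))
    simp
  rw [natDegree_C_mul hfact, natDegree_prod _ _ hfne]
  have : ∀ j ∈ Finset.range i, ((Polynomial.X - Polynomial.C (2 * j : ℚ))
      * (Polynomial.X - Polynomial.C (2 * j + 1 : ℚ)) * Polynomial.C (2⁻¹ : ℚ)).natDegree = 2 := by
    intro j _
    rw [natDegree_mul (mul_ne_zero (X_sub_C_ne_zero _) (X_sub_C_ne_zero _)) (by simp),
      natDegree_mul (X_sub_C_ne_zero _) (X_sub_C_ne_zero _),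
      natDegree_X_sub_C, natDegree_X_sub_C, natDegree_C]
  rw [Finset.sum_congr rfl this, Finset.sum_const, smul_eq_mul, Finset.card_range]
  ring

lemma prodPoly_lead (i : ℕ) :
    (Polynomial.C ((i.factorial : ℚ))⁻¹ * ∏ j ∈ Finset.range i,
      ((Polynomial.X - Polynomial.C (2 * j : ℚ))
        * (Polynomial.X - Polynomial.C (2 * j + 1 : ℚ)) * Polynomial.C (2⁻¹ : ℚ))).leadingCoeff
      = 1 / ((i.factorial : ℚ) * 2 ^ i) := by
  rw [leadingCoeff_mul, leadingCoeff_C, leadingCoeff_prod]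
  have : ∀ j ∈ Finset.range i, ((Polynomial.X - Polynomial.C (2 * j : ℚ))
      * (Polynomial.X - Polynomial.C (2 * j + 1 : ℚ)) * Polynomial.C (2⁻¹ : ℚ)).leadingCoeff
      = 2⁻¹ := by
    intro j _
    rw [leadingCoeff_mul, leadingCoeff_mul, (monic_X_sub_C _).leadingCoeff,
      (monic_X_sub_C _).leadingCoeff, leadingCoeff_C]
    ring
  rw [Finset.prod_congr rfl this, Finset.prod_const, Finset.card_range, one_div, mul_inv, inv_pow]


end AuxStir

/-- Lemma 7 of the paper. For each fixed `i ≥ 1` there is a polynomial `P`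
of degree `2i` with leading coefficient `1/(i!·2^i)` such that `c(n, n−i) = P(n)` for all
`n ≥ 2i`; its leading term agrees with the leading term of
`(1/i!)·C(n,2)·C(n−2,2)···C(n−2i+2,2)`. -/
theorem statement11 (i : ℕ) (hi : 1 ≤ i) :
    ∃ P : Polynomial ℚ,
      P.natDegree = 2 * i ∧
      P.leadingCoeff = 1 / ((i.factorial : ℚ) * 2 ^ i) ∧
      (P.natDegree =
          (Polynomial.C ((i.factorial : ℚ))⁻¹ * ∏ j ∈ Finset.range i,
            ((Polynomial.X - Polynomial.C (2 * j : ℚ))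
              * (Polynomial.X - Polynomial.C (2 * j + 1 : ℚ)) * Polynomial.C (2⁻¹ : ℚ))).natDegree ∧
        P.leadingCoeff =
          (Polynomial.C ((i.factorial : ℚ))⁻¹ * ∏ j ∈ Finset.range i,
            ((Polynomial.X - Polynomial.C (2 * j : ℚ))
              * (Polynomial.X - Polynomial.C (2 * j + 1 : ℚ)) * Polynomial.C (2⁻¹ : ℚ))).leadingCoeff) ∧
      ∀ n : ℕ, 2 * i ≤ n → (stirC n (n - i) : ℚ) = P.eval (n : ℚ) := by
  obtain ⟨P, h1, h2, h3⟩ := keyPoly i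
  exact ⟨P, h1, h2, ⟨by rw [h1, prodPoly_deg], by rw [h2, prodPoly_lead]⟩, h3⟩
end

section
/- For all n ≥ 3, in the transposition Cayley graph Sym_n(T) one has N(Sym_n(T), 1) = 3, i.e. the maximum over pairs of distinct permutations x ≠ y of |B_1(x) ∩ B_1(y)| equals 3. -/
open Finset Equiv
open scoped Classical

section aux
variable {α : Type*} [DecidableEq α] [Fintype α]

/-- A swap equals the swap of any moved point and its image. -/
lemma isSwap_eq_swap_apply {s : Equiv.Perm α} (hs : s.IsSwap) {q : α} (h : s q ≠ q) :
    s = Equiv.swap q (s q) := by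
  obtain ⟨a, b, hab, rfl⟩ := hs
  rcases eq_or_ne q a with rfl | hqa
  · rw [Equiv.swap_apply_left]
  · rcases eq_or_ne q b with rfl | hqb
    · rw [Equiv.swap_apply_right, Equiv.swap_comm]
    · exact absurd (Equiv.swap_apply_of_ne_of_ne hqa hqb) h

lemma swap_mul_self' {s : Equiv.Perm α} (hs : s.IsSwap) : s * s = 1 := by
  obtain ⟨a, b, hab, rfl⟩ := hs
  exact Equiv.swap_mul_self a b

lemma isSwap_inv {s : Equiv.Perm α} (hs : s.IsSwap) : s⁻¹ = s := by
  obtain ⟨a, b, hab, rfl⟩ := hs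
  exact Equiv.swap_inv a b

/-- If `z = s * t` with `s, t` swaps and `z ≠ 1`, then the supports of `s` and `t`
are contained in the support of `z`. -/
lemma support_subset_of_swap_factors {z s t : Equiv.Perm α} (hz : z ≠ 1)
    (hs : s.IsSwap) (ht : t.IsSwap) (hzst : z = s * t) :
    t.support ⊆ z.support ∧ s.support ⊆ z.support := by
  have key : ∀ p, p ∉ z.support → p ∈ t.support → False := by
    intro p hpz hpt
    have hzp : z p = p := Equiv.Perm.notMem_support.mp hpz
    have htp : t p ≠ p := Equiv.Perm.mem_support.mp hpt
    have hstp : s (t p) = p := by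
      have : z p = s (t p) := by rw [hzst]; rfl
      rw [hzp] at this; exact this.symm
    have hstp' : s (t p) ≠ t p := by rw [hstp]; exact Ne.symm htp
    have hseq : s = Equiv.swap (t p) (s (t p)) := isSwap_eq_swap_apply hs hstp'
    have hteq : t = Equiv.swap p (t p) := isSwap_eq_swap_apply ht htp
    rw [hstp] at hseq
    rw [Equiv.swap_comm] at hseq
    have : s = t := hseq.trans hteq.symm
    apply hz
    rw [hzst, this, swap_mul_self' ht]
  constructor
  · intro p hpt
    by_contra hpz
    exact key p hpz hpt
  · intro p hps
    by_contra hpz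
    apply key p hpz
    have hzp : z p = p := Equiv.Perm.notMem_support.mp hpz
    have hsp : s p ≠ p := Equiv.Perm.mem_support.mp hps
    rw [Equiv.Perm.mem_support]
    intro htp
    apply hsp
    have : z p = s (t p) := by rw [hzst]; rfl
    rw [htp, hzp] at this
    exact this.symm

lemma card_swap_support_le {t : Equiv.Perm α} (ht : t.IsSwap) :
    t.support.card = 2 := Equiv.Perm.card_support_eq_two.mpr ht

/-- The number of swaps `t` such that `z * t` is also a swap is at most 3,
provided `z ≠ 1` and `z` is not a swap. -/
lemma card_factorizations_le {z : Equiv.Perm α} (hz1 : z ≠ 1) (hzsw : ¬ z.IsSwap) :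
    (Finset.univ.filter fun t : Equiv.Perm α => t.IsSwap ∧ (z * t).IsSwap).card ≤ 3 := by
  set S := Finset.univ.filter fun t : Equiv.Perm α => t.IsSwap ∧ (z * t).IsSwap with hS
  rcases Finset.eq_empty_or_nonempty S with hE | ⟨t₀, ht₀⟩
  · simp [hE]
  have ht₀' := Finset.mem_filter.mp ht₀
  have ht₀s := ht₀'.2.1
  have hzt₀s := ht₀'.2.2
  -- z = (z*t₀) * t₀
  have hfact : ∀ t ∈ S, z = (z * t) * t := by
    intro t htS
    have h := (Finset.mem_filter.mp htS).2.1
    rw [mul_assoc, swap_mul_self' h, mul_one]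
  -- support facts for any t ∈ S
  have hsupp : ∀ t ∈ S, t.support ⊆ z.support ∧ (z * t).support ⊆ z.support := by
    intro t htS
    have h := (Finset.mem_filter.mp htS).2
    exact support_subset_of_swap_factors hz1 h.2 h.1 (hfact t htS)
  have hcover : ∀ t ∈ S, z.support ⊆ (z * t).support ∪ t.support := by
    intro t htS
    have := Equiv.Perm.support_mul_le (z * t) t
    rw [← hfact t htS] at this
    exact this
  -- |supp z| ≤ 4
  have hcard4 : z.support.card ≤ 4 := by
    calc z.support.card ≤ ((z * t₀).support ∪ t₀.support).card :=
          Finset.card_le_card (hcover t₀ ht₀)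
      _ ≤ (z * t₀).support.card + t₀.support.card := Finset.card_union_le _ _
      _ = 4 := by
          rw [card_swap_support_le hzt₀s, card_swap_support_le ht₀s]
  have hcard3 : 3 ≤ z.support.card := by
    by_contra h
    push_neg at h
    interval_cases hc : z.support.card
    · exact hz1 (Equiv.Perm.card_support_le_one.mp (by omega))
    · exact hz1 (Equiv.Perm.card_support_le_one.mp (by omega))
    · exact hzsw (Equiv.Perm.card_support_eq_two.mp hc)
  rcases Nat.eq_or_lt_of_le hcard3 with h3 | h4
  · -- |supp z| = 3 : inject into 2-subsets of supp z
    have hinj : Set.InjOn (fun t : Equiv.Perm α => t.support) S := by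
      intro a ha b hb hab
      have ha' := (Finset.mem_filter.mp ha).2.1
      have hb' := (Finset.mem_filter.mp hb).2.1
      obtain ⟨a1, a2, ha12, rfl⟩ := ha'
      obtain ⟨b1, b2, hb12, rfl⟩ := hb'
      simp only [Equiv.Perm.support_swap ha12, Equiv.Perm.support_swap hb12] at hab
      have hab' : ({a1, a2} : Set α) = {b1, b2} := by
        simpa using congrArg (fun s : Finset α => (s : Set α)) hab
      have := Set.pair_eq_pair_iff.mp hab'
      rcases this with ⟨rfl, rfl⟩ | ⟨rfl, rfl⟩
      · rfl
      · exact Equiv.swap_comm _ _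
    have hmaps : ∀ t ∈ S, t.support ∈ z.support.powersetCard 2 := by
      intro t htS
      rw [Finset.mem_powersetCard]
      exact ⟨(hsupp t htS).1, card_swap_support_le (Finset.mem_filter.mp htS).2.1⟩
    calc S.card ≤ (z.support.powersetCard 2).card :=
          Finset.card_le_card_of_injOn _ hmaps hinj
      _ = Nat.choose 3 2 := by rw [Finset.card_powersetCard, ← h3]
      _ = 3 := by norm_num
  · -- |supp z| = 4
    have h4' : z.support.card = 4 := le_antisymm hcard4 h4
    obtain ⟨a₀, ha₀⟩ : z.support.Nonempty := Finset.card_pos.mp (by omega)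
    have hsub : S ⊆ {Equiv.swap a₀ (z a₀), Equiv.swap a₀ (z a₀) * z} := by
      intro t htS
      have hts := (Finset.mem_filter.mp htS).2.1
      have hzts := (Finset.mem_filter.mp htS).2.2
      set s := z * t with hs
      have hzst : z = s * t := hfact t htS
      have hsubs := hsupp t htS
      -- disjoint supports
      have hunion : (s.support ∪ t.support).card = 4 := by
        refine le_antisymm ?_ ?_
        · calc (s.support ∪ t.support).card ≤ s.support.card + t.support.card :=
              Finset.card_union_le _ _
            _ = 4 := by rw [card_swap_support_le hzts, card_swap_support_le hts]
        · rw [← h4']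
          exact Finset.card_le_card (hcover t htS)
      have hdisj : Disjoint s.support t.support := by
        rw [Finset.disjoint_iff_inter_eq_empty, ← Finset.card_eq_zero]
        have := Finset.card_union_add_card_inter s.support t.support
        rw [hunion, card_swap_support_le hzts, card_swap_support_le hts] at this
        omega
      -- agreement on supports
      have hagree_t : ∀ x ∈ t.support, z x = t x := by
        intro x hx
        have htx : t x ∈ t.support := Equiv.Perm.apply_mem_support.mpr hx
        have : t x ∉ s.support := Finset.disjoint_right.mp hdisj htx
        have hsfix : s (t x) = t x := Equiv.Perm.notMem_support.mp this
        calc z x = s (t x) := by rw [hzst]; rfl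
          _ = t x := hsfix
      have hagree_s : ∀ x ∈ s.support, z x = s x := by
        intro x hx
        have : x ∉ t.support := Finset.disjoint_left.mp hdisj hx
        have htfix : t x = x := Equiv.Perm.notMem_support.mp this
        calc z x = s (t x) := by rw [hzst]; rfl
          _ = s x := by rw [htfix]
      have ha₀' : a₀ ∈ s.support ∪ t.support := hcover t htS ha₀
      simp only [Finset.mem_insert, Finset.mem_singleton]
      rcases Finset.mem_union.mp ha₀' with hin | hin
      · -- a₀ ∈ supp s: t = s⁻¹ * z = swap a₀ (z a₀) * z
        right
        have hsa : s a₀ ≠ a₀ := Equiv.Perm.mem_support.mp hin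
        have hseq : s = Equiv.swap a₀ (s a₀) := isSwap_eq_swap_apply hzts hsa
        rw [← hagree_s a₀ hin] at hseq
        have : t = s⁻¹ * z := by rw [hzst]; group
        rw [this, isSwap_inv hzts, hseq]
      · -- a₀ ∈ supp t: t = swap a₀ (z a₀)
        left
        have hta : t a₀ ≠ a₀ := Equiv.Perm.mem_support.mp hin
        have hteq : t = Equiv.swap a₀ (t a₀) := isSwap_eq_swap_apply hts hta
        rw [← hagree_t a₀ hin] at hteq
        exact hteq
    calc S.card ≤ ({Equiv.swap a₀ (z a₀), Equiv.swap a₀ (z a₀) * z} : Finset _).card :=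
          Finset.card_le_card hsub
      _ ≤ 2 := Finset.card_insert_le _ _ |>.trans (by simp)
      _ ≤ 3 := by omega

end aux

section graph
variable {n : ℕ}

lemma symT_adj {x y : Equiv.Perm (Fin n)} : (symT n).Adj x y ↔ (x⁻¹ * y).IsSwap := Iff.rfl

lemma symT_preconnected : (symT n).Preconnected := by
  have key : ∀ f : Equiv.Perm (Fin n), ∀ a, (symT n).Reachable a (a * f) := by
    intro f
    refine Equiv.Perm.swap_induction_on' f ?_ ?_
    · intro a; rw [mul_one]
    · intro g u v huv ih a
      have h1 := ih a
      have h2 : (symT n).Adj (a * g) (a * g * Equiv.swap u v) := by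
        rw [symT_adj]
        exact ⟨u, v, huv, by group⟩
      rw [← mul_assoc]
      exact h1.trans h2.reachable
  intro x y
  have := key (x⁻¹ * y) x
  rwa [mul_inv_cancel_left] at this
  
lemma mem_gBall_one {x w : Equiv.Perm (Fin n)} :
    w ∈ gBall (symT n) x 1 ↔ w = x ∨ (x⁻¹ * w).IsSwap := by
  simp only [gBall, Finset.mem_filter, Finset.mem_univ, true_and]
  constructor
  · intro h
    rcases Nat.le_one_iff_eq_zero_or_eq_one.mp h with h0 | h1
    · left
      exact ((symT_preconnected x w).dist_eq_zero_iff.mp h0).symm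
    · right
      exact SimpleGraph.dist_eq_one_iff_adj.mp h1
  · rintro (rfl | hsw)
    · rw [SimpleGraph.dist_self]; omega
    · exact (SimpleGraph.dist_eq_one_iff_adj.mpr hsw).le

end graph

lemma le_gN {V : Type*} [Fintype V] (G : SimpleGraph V) (r : ℕ) (x y : V) (h : x ≠ y)
    (s : Finset V) (hs : ∀ w ∈ s, w ∈ gBall G x r ∧ w ∈ gBall G y r) :
    s.card ≤ gN G r := by
  unfold gN
  refine le_trans ?_ (Finset.le_sup (b := (x, y)) (Finset.mem_filter.mpr ⟨Finset.mem_univ _, h⟩))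
  apply Finset.card_le_card
  intro w hw
  rw [Finset.mem_inter]
  exact hs w hw

lemma gN_le {V : Type*} [Fintype V] (G : SimpleGraph V) (r m : ℕ)
    (h : ∀ x y : V, x ≠ y →
      ∃ s : Finset V, (∀ w, w ∈ gBall G x r → w ∈ gBall G y r → w ∈ s) ∧ s.card ≤ m) :
    gN G r ≤ m := by
  unfold gN
  apply Finset.sup_le
  rintro ⟨x, y⟩ hp
  obtain ⟨s, hs1, hs2⟩ := h x y (Finset.mem_filter.mp hp).2
  refine le_trans (Finset.card_le_card ?_) hs2
  intro w hw
  obtain ⟨h1, h2⟩ := Finset.mem_inter.mp hw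
  exact hs1 w h1 h2

lemma lower_bound_aux {n : ℕ} (i0 i1 i2 : Fin n)
    (h01 : i0 ≠ i1) (h12 : i1 ≠ i2) (h02 : i0 ≠ i2) : 3 ≤ gN (symT n) 1 := by
  have hc1 : (1 : Equiv.Perm (Fin n)) ≠ Equiv.swap i0 i1 * Equiv.swap i1 i2 := by
    intro h
    have hci2 : (Equiv.swap i0 i1 * Equiv.swap i1 i2) i2 = i0 := by
      rw [Equiv.Perm.mul_apply, Equiv.swap_apply_right, Equiv.swap_apply_right]
    rw [← h] at hci2
    exact h02 (by simpa using hci2.symm)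
  have key1 : Equiv.swap i1 i2 * Equiv.swap i0 i1 * Equiv.swap i1 i2 = Equiv.swap i2 i0 :=
    Equiv.swap_mul_swap_mul_swap h01 h02
  have key2 : Equiv.swap i0 i1 * Equiv.swap i1 i2 * Equiv.swap i0 i1 = Equiv.swap i0 i2 := by
    have := Equiv.swap_mul_swap_mul_swap h12.symm h02.symm
    rwa [Equiv.swap_comm i1 i0, Equiv.swap_comm i2 i1] at this
  have hmem : ∀ w : Equiv.Perm (Fin n), w.IsSwap →
      ((Equiv.swap i0 i1 * Equiv.swap i1 i2)⁻¹ * w).IsSwap →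
      w ∈ gBall (symT n) 1 1 ∧
        w ∈ gBall (symT n) (Equiv.swap i0 i1 * Equiv.swap i1 i2) 1 := by
    intro w h1 h2
    rw [mem_gBall_one, mem_gBall_one]
    refine ⟨Or.inr ?_, Or.inr h2⟩
    rw [inv_one, one_mul]
    exact h1
  have hne12 : Equiv.swap i0 i1 ≠ Equiv.swap i1 i2 := by
    intro h
    have := DFunLike.congr_fun h i0
    rw [Equiv.swap_apply_left, Equiv.swap_apply_of_ne_of_ne h01 h02] at this
    exact h01 this.symm
  have hne13 : Equiv.swap i0 i1 ≠ Equiv.swap i0 i2 := by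
    intro h
    have := DFunLike.congr_fun h i1
    rw [Equiv.swap_apply_right, Equiv.swap_apply_of_ne_of_ne h01.symm h12] at this
    exact h01 this
  have hne23 : Equiv.swap i1 i2 ≠ Equiv.swap i0 i2 := by
    intro h
    have := DFunLike.congr_fun h i1
    rw [Equiv.swap_apply_left, Equiv.swap_apply_of_ne_of_ne h01.symm h12] at this
    exact h12 this.symm
  have hcard : ({Equiv.swap i0 i1, Equiv.swap i1 i2, Equiv.swap i0 i2} :
      Finset (Equiv.Perm (Fin n))).card = 3 := by
    rw [Finset.card_insert_of_notMem (by simp [hne12, hne13]),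
      Finset.card_insert_of_notMem (by simp [hne23]), Finset.card_singleton]
  rw [← hcard]
  apply le_gN (symT n) 1 _ _ hc1
  intro w hw
  simp only [Finset.mem_insert, Finset.mem_singleton] at hw
  rcases hw with rfl | rfl | rfl
  · refine hmem _ ⟨i0, i1, h01, rfl⟩ ?_
    have heq : (Equiv.swap i0 i1 * Equiv.swap i1 i2)⁻¹ * Equiv.swap i0 i1 = Equiv.swap i1 i2 := by
      rw [mul_inv_rev, Equiv.swap_inv, Equiv.swap_inv, mul_assoc, Equiv.swap_mul_self, mul_one]
    rw [heq]
    exact ⟨i1, i2, h12, rfl⟩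
  · refine hmem _ ⟨i1, i2, h12, rfl⟩ ?_
    have heq : (Equiv.swap i0 i1 * Equiv.swap i1 i2)⁻¹ * Equiv.swap i1 i2 = Equiv.swap i2 i0 := by
      rw [mul_inv_rev, Equiv.swap_inv, Equiv.swap_inv]
      exact key1
    rw [heq]
    exact ⟨i2, i0, h02.symm, rfl⟩
  · refine hmem _ ⟨i0, i2, h02, rfl⟩ ?_
    have heq : (Equiv.swap i0 i1 * Equiv.swap i1 i2)⁻¹ * Equiv.swap i0 i2 = Equiv.swap i0 i1 := by
      rw [← key2, inv_mul_cancel_left]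
    rw [heq]
    exact ⟨i0, i1, h01, rfl⟩

/-- Theorem 5 of the paper. For `n ≥ 3`, in the transposition Cayley graph
`Sym_n(T)` one has `N(Sym_n(T), 1) = 3`: the maximum over pairs of distinct permutations
`x ≠ y` of `|B_1(x) ∩ B_1(y)|` equals `3`. -/
theorem statement12 (n : ℕ) (hn : 3 ≤ n) : gN (symT n) 1 = 3 := by
  apply le_antisymm
  · -- upper bound
    apply gN_le
    rintro x y hxy
    have hz1 : x⁻¹ * y ≠ 1 := fun h => hxy (inv_mul_eq_one.mp h)
    by_cases hzs : (x⁻¹ * y).IsSwap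
    · -- distance one: intersection inside {x, y}
      refine ⟨{x, y}, ?_, (Finset.card_insert_le _ _).trans (by simp)⟩
      intro w hwx hwy
      rw [mem_gBall_one] at hwx hwy
      rcases hwx with rfl | hx'
      · exact Finset.mem_insert_self _ _
      rcases hwy with rfl | hy'
      · exact Finset.mem_insert_of_mem (Finset.mem_singleton_self _)
      exfalso
      have hcalc : (x⁻¹ * w) * (y⁻¹ * w)⁻¹ = x⁻¹ * y := by group
      have hsign := congrArg Equiv.Perm.sign hcalc
      rw [map_mul, map_inv, hx'.sign_eq, hy'.sign_eq, hzs.sign_eq] at hsign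
      norm_num at hsign
    · -- distance ≥ 2 : inject into factorizations
      refine ⟨(Finset.univ.filter
          (fun t : Equiv.Perm (Fin n) => t.IsSwap ∧ ((x⁻¹ * y) * t).IsSwap)).image
          (fun t => y * t), ?_, ?_⟩
      · intro w hwx hwy
        rw [mem_gBall_one] at hwx hwy
        have hwx' : (x⁻¹ * w).IsSwap := by
          rcases hwx with heq | h
          · exfalso
            rcases hwy with heq2 | h
            · exact hxy (heq.symm.trans heq2)
            · apply hzs
              rw [heq] at h
              have he : x⁻¹ * y = (y⁻¹ * x)⁻¹ := by group
              rw [he, isSwap_inv h]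
              exact h
          · exact h
        have hwy' : (y⁻¹ * w).IsSwap := by
          rcases hwy with heq | h
          · exfalso
            rw [heq] at hwx'
            exact hzs hwx'
          · exact h
        rw [Finset.mem_image]
        refine ⟨y⁻¹ * w, ?_, by group⟩
        rw [Finset.mem_filter]
        refine ⟨Finset.mem_univ _, hwy', ?_⟩
        have he : (x⁻¹ * y) * (y⁻¹ * w) = x⁻¹ * w := by group
        rw [he]
        exact hwx'
      · exact le_trans Finset.card_image_le (card_factorizations_le hz1 hzs)
  · -- lower bound
    have h0 : 0 < n := by omega
    have h1 : 1 < n := by omega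
    have h2 : 2 < n := by omega
    exact lower_bound_aux ⟨0, h0⟩ ⟨1, h1⟩ ⟨2, h2⟩
      (by simp [Fin.ext_iff]) (by simp [Fin.ext_iff]) (by simp [Fin.ext_iff])
end

section
/- For every fixed r ≥ 2 there exists n₀ such that for all n ≥ n₀ one has N_2(Sym_n(T), r) > N_1(Sym_n(T), r) in the transposition Cayley graph Sym_n(T). -/
open Finset Equiv
open scoped Classical
open scoped Nat

namespace S17


variable {n : ℕ}

lemma exists_walk_of_list (x : Perm (Fin n)) :
    ∀ l : List (Perm (Fin n)), (∀ t ∈ l, t.IsSwap) →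
      ∃ p : (symT n).Walk x (x * l.prod), p.length ≤ l.length := by
  intro l
  induction l generalizing x with
  | nil => exact fun _ => ⟨(SimpleGraph.Walk.nil).copy rfl (by simp), by rw [SimpleGraph.Walk.length_copy]; simp⟩
  | cons t l ih =>
    intro h
    obtain ⟨p, hp⟩ := ih (x * t) (fun s hs => h s (by simp [hs]))
    have hadj : (symT n).Adj x (x * t) := by
      show (x⁻¹ * (x * t)).IsSwap
      have : x⁻¹ * (x * t) = t := by group
      rw [this]; exact h t (by simp)
    refine ⟨(SimpleGraph.Walk.cons hadj p).copy rfl (by simp [mul_assoc]), ?_⟩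
    simpa using Nat.succ_le_succ hp

lemma dist_le_of_list {x z : Perm (Fin n)} (l : List (Perm (Fin n))) (hl : ∀ t ∈ l, t.IsSwap)
    (hz : x * l.prod = z) : (symT n).dist x z ≤ l.length := by
  subst hz
  obtain ⟨p, hp⟩ := exists_walk_of_list x l hl
  exact (SimpleGraph.dist_le p).trans hp

lemma list_of_walk {x z : Perm (Fin n)} (p : (symT n).Walk x z) :
    ∃ l : List (Perm (Fin n)), (∀ t ∈ l, t.IsSwap) ∧ l.length = p.length ∧ x * l.prod = z := by
  induction p with
  | nil => exact ⟨[], by simp, by simp, by simp⟩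
  | @cons u v w h p ih =>
    obtain ⟨l, hl, hlen, hprod⟩ := ih
    refine ⟨(u⁻¹ * v) :: l, ?_, by simp [hlen], ?_⟩
    · intro t ht
      rcases List.mem_cons.mp ht with h' | h'
      · rw [h']; exact h
      · exact hl t h'
    · rw [List.prod_cons, ← mul_assoc, mul_inv_cancel_left, hprod]

lemma symT_connected (n : ℕ) : (symT n).Connected := by
  rw [SimpleGraph.connected_iff]
  have key : ∀ z : Perm (Fin n), (symT n).Reachable 1 z := by
    intro z
    obtain ⟨l, hp, hs⟩ := (Equiv.Perm.truncSwapFactors z).out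
    obtain ⟨p, -⟩ := exists_walk_of_list 1 l hs
    exact ⟨p.copy rfl (by rw [one_mul, hp])⟩
  exact ⟨fun a b => (key a).symm.trans (key b), ⟨1⟩⟩

lemma dist_mul_left (g x y : Perm (Fin n)) :
    (symT n).dist (g * x) (g * y) = (symT n).dist x y := by
  have gen : ∀ (h x y : Perm (Fin n)),
      (symT n).dist (h * x) (h * y) ≤ (symT n).dist x y := by
    intro h x y
    obtain ⟨p, hp⟩ := (symT_connected n).exists_walk_length_eq_dist x y
    obtain ⟨l, hl, hlen, hprod⟩ := list_of_walk p
    have : (h * x) * l.prod = h * y := by rw [mul_assoc, hprod]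
    calc (symT n).dist (h * x) (h * y) ≤ l.length := dist_le_of_list l hl this
      _ = _ := by rw [hlen, hp]
  refine le_antisymm (gen g x y) ?_
  have := gen g⁻¹ (g * x) (g * y)
  simpa using this

lemma sign_dist (x z : Perm (Fin n)) :
    Equiv.Perm.sign (x⁻¹ * z) = (-1) ^ ((symT n).dist x z) := by
  rcases eq_or_ne ((symT n).dist x z) 0 with h0 | h0
  · have : x = z := ((symT_connected n).dist_eq_zero_iff).mp h0
    subst this; simp [h0]
  · obtain ⟨p, hp⟩ := SimpleGraph.exists_walk_of_dist_ne_zero h0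
    obtain ⟨l, hl, hlen, hprod⟩ := list_of_walk p
    have : x⁻¹ * z = l.prod := by rw [← hprod]; group
    rw [this, Equiv.Perm.sign_prod_list_swap hl, hlen, hp]


section

variable {n : ℕ} {α : Type*} [Fintype α] [DecidableEq α]

-- support of product of list of swaps
lemma support_prod_card_le : ∀ l : List (Perm α), (∀ t ∈ l, t.IsSwap) →
    l.prod.support.card ≤ 2 * l.length := by
  intro l
  induction l with
  | nil => simp
  | cons t l ih =>
    intro h
    have h1 : (t * l.prod).support ⊆ t.support ∪ l.prod.support := by
      simpa using Equiv.Perm.support_mul_le t l.prod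
    calc (t :: l).prod.support.card ≤ (t.support ∪ l.prod.support).card := by
          rw [List.prod_cons]; exact Finset.card_le_card h1
      _ ≤ t.support.card + l.prod.support.card := Finset.card_union_le _ _
      _ ≤ 2 + 2 * l.length := by
          gcongr
          · exact le_of_eq (Equiv.Perm.card_support_eq_two.mpr (h t (by simp)))
          · exact ih (fun s hs => h s (by simp [hs]))
      _ = 2 * (t :: l).length := by simp [Nat.mul_add, Nat.add_comm, Nat.mul_succ]

lemma sq_one_of_tight : ∀ l : List (Perm α), (∀ t ∈ l, t.IsSwap) →
    2 * l.length ≤ l.prod.support.card → l.prod * l.prod = 1 := by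
  intro l
  induction l with
  | nil => simp
  | cons t l ih =>
    intro h hc
    have hts : t.IsSwap := h t (by simp)
    have hls : ∀ s ∈ l, Equiv.Perm.IsSwap s := fun s hs => h s (by simp [hs])
    have htc : t.support.card = 2 := Equiv.Perm.card_support_eq_two.mpr hts
    rw [List.prod_cons] at hc ⊢
    have h1 : (t * l.prod).support ⊆ t.support ∪ l.prod.support := by
      simpa using Equiv.Perm.support_mul_le t l.prod
    have h2 : l.prod.support.card ≤ 2 * l.length := support_prod_card_le l hls
    have h3 : 2 * l.length + 2 ≤ (t.support ∪ l.prod.support).card := by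
      have := Finset.card_le_card h1
      have hlen : 2 * (t :: l).length = 2 * l.length + 2 := by simp [Nat.mul_succ]
      omega
    have h4 : (t.support ∪ l.prod.support).card ≤ t.support.card + l.prod.support.card :=
      Finset.card_union_le _ _
    -- forces equality, hence disjoint supports
    have h5 : (t.support ∪ l.prod.support).card = t.support.card + l.prod.support.card ∧
        2 * l.length ≤ l.prod.support.card := by omega
    have hdisj : Disjoint t.support l.prod.support := by
      have := Finset.card_union_add_card_inter t.support l.prod.support
      have hint : (t.support ∩ l.prod.support).card = 0 := by omega
      rw [Finset.card_eq_zero] at hint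
      exact Finset.disjoint_iff_inter_eq_empty.mpr hint
    have hpd : t.Disjoint l.prod := Equiv.Perm.disjoint_iff_disjoint_support.mpr hdisj
    have hcomm : Commute t l.prod := hpd.commute
    have hl2 : l.prod * l.prod = 1 := ih hls h5.2
    have ht2 : t * t = 1 := by
      obtain ⟨a, b, hab, rfl⟩ := hts
      exact Equiv.swap_mul_self a b
    calc t * l.prod * (t * l.prod) = t * (l.prod * t) * l.prod := by group
      _ = t * (t * l.prod) * l.prod := by rw [hcomm.eq]
      _ = (t * t) * (l.prod * l.prod) := by group
      _ = 1 := by rw [hl2, ht2, one_mul]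

-- counting permutations with support inside s
lemma card_support_subset_le (s : Finset α) :
    (Finset.univ.filter fun z : Perm α => z.support ⊆ s).card ≤ Nat.factorial s.card := by
  classical
  have key : ∀ z : Perm α, z.support ⊆ s → ∀ x, x ∈ s ↔ z x ∈ s := by
    intro z hz x
    constructor
    · intro hx
      by_cases hxs : x ∈ z.support
      · exact hz (Equiv.Perm.apply_mem_support.mpr hxs)
      · rwa [Equiv.Perm.notMem_support.mp hxs]
    · intro hx
      by_cases hxs : x ∈ z.support
      · exact hz hxs
      · rwa [Equiv.Perm.notMem_support.mp hxs] at hx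
  set f : Perm α → Perm {x // x ∈ s} := fun z =>
    if h : z.support ⊆ s then z.subtypePerm (fun x => (key z h x).symm) else 1 with hf
  have hinj : Set.InjOn f (Finset.univ.filter fun z : Perm α => z.support ⊆ s) := by
    intro z hz w hw hzw
    simp only [Finset.coe_filter, Set.mem_setOf_eq] at hz hw
    rw [hf] at hzw
    simp only [dif_pos hz.2, dif_pos hw.2] at hzw
    ext x
    by_cases hx : x ∈ s
    · exact congrArg Subtype.val (congrFun (congrArg (fun (e : Perm {x // x ∈ s}) => e.toFun) hzw) ⟨x, hx⟩)
    · rw [Equiv.Perm.notMem_support.mp (fun hc => hx (hz.2 hc)),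
        Equiv.Perm.notMem_support.mp (fun hc => hx (hw.2 hc))]
  calc (Finset.univ.filter fun z : Perm α => z.support ⊆ s).card
      ≤ (Finset.univ : Finset (Perm {x // x ∈ s})).card := by
        apply Finset.card_le_card_of_injOn f (fun z _ => Finset.mem_univ _) hinj
    _ = Nat.factorial s.card := by
        rw [Finset.card_univ, Fintype.card_perm, Fintype.card_coe]

lemma card_small_support_le (m : ℕ) (hm : m ≤ Fintype.card α) :
    (Finset.univ.filter fun z : Perm α => z.support.card ≤ m).card
      ≤ (Fintype.card α).choose m * m ! := by
  classical
  have hsub : (Finset.univ.filter fun z : Perm α => z.support.card ≤ m) ⊆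
      (Finset.powersetCard m (Finset.univ : Finset α)).biUnion
        (fun s => Finset.univ.filter fun z : Perm α => z.support ⊆ s) := by
    intro z hz
    simp only [Finset.mem_filter] at hz
    obtain ⟨s, hs1, hs2, hs3⟩ := Finset.exists_subsuperset_card_eq
      (Finset.subset_univ z.support) hz.2 (by simpa using hm)
    exact Finset.mem_biUnion.mpr ⟨s, by simp [Finset.mem_powersetCard, hs2, hs3], by simp [hs1]⟩
  refine le_trans (Finset.card_le_card hsub) ?_
  calc _ ≤ ∑ s ∈ Finset.powersetCard m (Finset.univ : Finset α),
          (Finset.univ.filter fun z : Perm α => z.support ⊆ s).card := Finset.card_biUnion_le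
    _ ≤ ∑ s ∈ Finset.powersetCard m (Finset.univ : Finset α), m ! := by
        apply Finset.sum_le_sum
        intro s hs
        have : s.card = m := (Finset.mem_powersetCard.mp hs).2
        simpa [this] using card_support_subset_le s
    _ = (Fintype.card α).choose m * m ! := by
        rw [Finset.sum_const, smul_eq_mul, Finset.card_powersetCard, Finset.card_univ]

lemma card_touch_le (x0 : α) (m : ℕ) (hm : m ≤ Fintype.card α) (hm0 : 1 ≤ m) :
    (Finset.univ.filter fun z : Perm α => x0 ∈ z.support ∧ z.support.card ≤ m).card
      ≤ (Fintype.card α).choose (m - 1) * m ! := by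
  classical
  set P : Finset (Finset α) := (Finset.powersetCard m (Finset.univ : Finset α)).filter
    (fun s => x0 ∈ s) with hP
  have hsub : (Finset.univ.filter fun z : Perm α => x0 ∈ z.support ∧ z.support.card ≤ m) ⊆
      P.biUnion (fun s => Finset.univ.filter fun z : Perm α => z.support ⊆ s) := by
    intro z hz
    simp only [Finset.mem_filter] at hz
    obtain ⟨s, hs1, hs2, hs3⟩ := Finset.exists_subsuperset_card_eq
      (Finset.subset_univ z.support) hz.2.2 (by simpa using hm)
    refine Finset.mem_biUnion.mpr ⟨s, ?_, by simp [hs1]⟩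
    rw [hP]
    simp only [Finset.mem_filter, Finset.mem_powersetCard]
    exact ⟨⟨hs2, hs3⟩, hs1 hz.2.1⟩
  have hPcard : P.card ≤ (Fintype.card α).choose (m - 1) := by
    have hinjP : Set.InjOn (fun s : Finset α => s.erase x0) P := by
      intro s hs t ht hst
      simp only [hP, Finset.coe_filter, Set.mem_setOf_eq] at hs ht
      have : insert x0 (s.erase x0) = insert x0 (t.erase x0) := by
        simp only at hst; rw [hst]
      rwa [Finset.insert_erase hs.2, Finset.insert_erase ht.2] at this
    have hmaps : ∀ s ∈ P, s.erase x0 ∈ Finset.powersetCard (m - 1) (Finset.univ : Finset α) := by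
      intro s hs
      simp only [hP, Finset.mem_filter, Finset.mem_powersetCard] at hs
      rw [Finset.mem_powersetCard]
      exact ⟨Finset.subset_univ _, by rw [Finset.card_erase_of_mem hs.2, hs.1.2]⟩
    calc P.card ≤ (Finset.powersetCard (m - 1) (Finset.univ : Finset α)).card :=
          Finset.card_le_card_of_injOn _ hmaps hinjP
      _ = (Fintype.card α).choose (m - 1) := by
          rw [Finset.card_powersetCard, Finset.card_univ]
  refine le_trans (Finset.card_le_card hsub) ?_
  calc _ ≤ ∑ s ∈ P, (Finset.univ.filter fun z : Perm α => z.support ⊆ s).card :=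
        Finset.card_biUnion_le
    _ ≤ ∑ s ∈ P, m ! := by
        apply Finset.sum_le_sum
        intro s hs
        have : s.card = m := by
          simp only [hP, Finset.mem_filter, Finset.mem_powersetCard] at hs
          exact hs.1.2
        simpa [this] using card_support_subset_le s
    _ = P.card * m ! := by rw [Finset.sum_const, smul_eq_mul]
    _ ≤ (Fintype.card α).choose (m - 1) * m ! := by gcongr


end
section

variable {α : Type*} [Fintype α] [DecidableEq α]

lemma mul_invol_of_disjoint {u v : Perm α} (h : u.Disjoint v) (hu : u * u = 1)
    (hv : v * v = 1) : (u * v) * (u * v) = 1 := by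
  have hc : Commute u v := h.commute
  calc u * v * (u * v) = u * (v * u) * v := by group
    _ = u * (u * v) * v := by rw [hc.eq]
    _ = (u * u) * (v * v) := by group
    _ = 1 := by rw [hu, hv, one_mul]

lemma exists_invol (k : ℕ) : ∀ s : Finset α, s.card = 2 * k →
    ∃ z : Perm α, z * z = 1 ∧ z.support = s := by
  induction k with
  | zero =>
    intro s hs
    refine ⟨1, one_mul 1, ?_⟩
    rw [Equiv.Perm.support_one, eq_comm, ← Finset.card_eq_zero]
    simpa using hs
  | succ k ih =>
    intro s hs
    obtain ⟨x, hxs⟩ := Finset.card_pos.mp (show 0 < s.card by omega)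
    have h1 : (s.erase x).card = 2 * k + 1 := by
      rw [Finset.card_erase_of_mem hxs]; omega
    obtain ⟨y, hys⟩ := Finset.card_pos.mp (show 0 < (s.erase x).card by omega)
    have hyx : y ≠ x := Finset.ne_of_mem_erase hys
    have hys' : y ∈ s := Finset.mem_of_mem_erase hys
    have h2 : ((s.erase x).erase y).card = 2 * k := by
      rw [Finset.card_erase_of_mem hys]; omega
    obtain ⟨w, hw1, hw2⟩ := ih _ h2
    have hss : (swap x y).support = {x, y} := Equiv.Perm.support_swap (Ne.symm hyx)
    have hdisj : Disjoint (swap x y).support w.support := by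
      rw [hss, hw2, Finset.disjoint_left]
      intro t ht hc
      simp only [Finset.mem_insert, Finset.mem_singleton] at ht
      simp only [Finset.mem_erase] at hc
      rcases ht with rfl | rfl
      · exact hc.2.1 rfl
      · exact hc.1 rfl
    have hpd : (swap x y).Disjoint w := Equiv.Perm.disjoint_iff_disjoint_support.mpr hdisj
    refine ⟨swap x y * w, mul_invol_of_disjoint hpd (Equiv.swap_mul_self x y) hw1, ?_⟩
    rw [hpd.support_mul, hss, hw2]
    ext t
    simp only [Finset.mem_union, Finset.mem_insert, Finset.mem_singleton, Finset.mem_erase]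
    constructor
    · rintro ((rfl | rfl) | ⟨_, _, h⟩) <;> first | exact hxs | exact hys' | assumption
    · intro hts
      by_cases h1 : t = x
      · exact Or.inl (Or.inl h1)
      by_cases h2 : t = y
      · exact Or.inl (Or.inr h2)
      · exact Or.inr ⟨h2, h1, hts⟩

lemma invol_factor : ∀ (k : ℕ) (z : Perm α), z * z = 1 → z.support.card = 2 * k →
    ∃ l : List (Perm α), (∀ t ∈ l, t.IsSwap) ∧ l.prod = z ∧ l.length = k := by
  intro k
  induction k with
  | zero =>
    intro z hz hc
    have : z.support = ∅ := Finset.card_eq_zero.mp (by simpa using hc)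
    have : z = 1 := Equiv.Perm.support_eq_empty_iff.mp this
    exact ⟨[], by simp, by simp [this], rfl⟩
  | succ k ih =>
    intro z hz hc
    obtain ⟨x, hx⟩ := Finset.card_pos.mp (show 0 < z.support.card by omega)
    have hzx : z x ≠ x := Equiv.Perm.mem_support.mp hx
    set y := z x with hy
    have hzy : z y = x := by
      have := congrArg (fun f : Perm α => f x) hz
      simpa [Equiv.Perm.mul_apply] using this
    have hxy : x ≠ y := fun h => hzx h.symm
    have hyx : y ≠ x := fun h => hzx h
    set z' := swap x y * z with hz'
    have hz'x : z' x = x := by simp [hz', Equiv.Perm.mul_apply, ← hy, Equiv.swap_apply_right]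
    have hz'y : z' y = y := by simp [hz', Equiv.Perm.mul_apply, hzy, Equiv.swap_apply_left]
    have hz'other : ∀ t, t ≠ x → t ≠ y → z' t = z t := by
      intro t htx hty
      have h1 : z t ≠ x := fun h => hty (z.injective (h.trans hzy.symm))
      have h2 : z t ≠ y := fun h => htx (z.injective (h.trans hy))
      simp [hz', Equiv.Perm.mul_apply, Equiv.swap_apply_of_ne_of_ne h1 h2]
    have hsupp' : z'.support = (z.support.erase x).erase y := by
      ext t
      simp only [Equiv.Perm.mem_support, Finset.mem_erase]
      by_cases h1 : t = x
      · subst h1; simp [hz'x, hzx]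
      by_cases h2 : t = y
      · subst h2; simp [hz'y]
      · rw [hz'other t h1 h2]
        simp [h1, h2]
    have hysupp : y ∈ z.support.erase x := by
      rw [Finset.mem_erase]
      refine ⟨hyx, ?_⟩
      rw [Equiv.Perm.mem_support, hzy]
      exact hxy
    have hc' : z'.support.card = 2 * k := by
      rw [hsupp', Finset.card_erase_of_mem hysupp, Finset.card_erase_of_mem hx, hc]; omega
    have hz'2 : z' * z' = 1 := by
      ext t
      simp only [Equiv.Perm.mul_apply, Equiv.Perm.one_apply]
      by_cases h1 : t = x
      · subst h1; rw [hz'x, hz'x]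
      by_cases h2 : t = y
      · subst h2; rw [hz'y, hz'y]
      · rw [hz'other t h1 h2]
        have hztx : z t ≠ x := fun h => h2 (z.injective (h.trans hzy.symm))
        have hzty : z t ≠ y := fun h => h1 (z.injective (h.trans hy))
        rw [hz'other _ hztx hzty]
        have := congrArg (fun f : Perm α => f t) hz
        simpa [Equiv.Perm.mul_apply] using this
    obtain ⟨l, hl1, hl2, hl3⟩ := ih z' hz'2 hc'
    refine ⟨swap x y :: l, ?_, ?_, by simp [hl3]⟩
    · intro t ht
      rcases List.mem_cons.mp ht with rfl | h
      · exact ⟨x, y, hxy, rfl⟩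
      · exact hl1 t h
    · rw [List.prod_cons, hl2, hz', ← mul_assoc, Equiv.swap_mul_self, one_mul]

lemma pow_le_descFactorial : ∀ (j m : ℕ), (m + 1 - j) ^ j ≤ m.descFactorial j := by
  intro j
  induction j with
  | zero => simp
  | succ j ih =>
    intro m
    rw [Nat.descFactorial_succ]
    have e1 : (m + 1 - (j + 1)) ^ (j + 1) = (m - j) * (m - j) ^ j := by
      have : m + 1 - (j + 1) = m - j := by omega
      rw [this, pow_succ, mul_comm]
    rw [e1]
    have h2 : (m - j) ^ j ≤ (m + 1 - j) ^ j := Nat.pow_le_pow_left (by omega) j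
    exact Nat.mul_le_mul_left _ (h2.trans (ih m))


end

lemma mem_gBall {V : Type*} [Fintype V] (G : SimpleGraph V) (x z : V) (m : ℕ) :
    z ∈ gBall G x m ↔ G.dist x z ≤ m := by simp [gBall]

lemma genN1 {V : Type*} [Fintype V] (G : SimpleGraph V) (k : ℕ) (x0 : V)
    (hpar : ∀ x y z : V, G.dist x y = 1 → G.dist x z = k + 1 → G.dist y z = k + 1 → False)
    (hball : ∀ x : V, (gBall G x k).card = (gBall G x0 k).card) :
    gNs G 1 (k + 1) ≤ 2 * (gBall G x0 k).card := by
  apply Finset.sup_le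
  intro p hp
  simp only [Finset.mem_filter, Finset.mem_univ, true_and] at hp
  have hsub : gBall G p.1 (k + 1) ∩ gBall G p.2 (k + 1) ⊆ gBall G p.1 k ∪ gBall G p.2 k := by
    intro z hz
    rw [Finset.mem_inter, mem_gBall, mem_gBall] at hz
    rw [Finset.mem_union, mem_gBall, mem_gBall]
    by_contra hcon
    push_neg at hcon
    exact hpar p.1 p.2 z hp (by omega) (by omega)
  show (gBall G p.1 (k + 1) ∩ gBall G p.2 (k + 1)).card ≤ 2 * (gBall G x0 k).card
  calc (gBall G p.1 (k + 1) ∩ gBall G p.2 (k + 1)).card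
      ≤ (gBall G p.1 k ∪ gBall G p.2 k).card := Finset.card_le_card hsub
    _ ≤ (gBall G p.1 k).card + (gBall G p.2 k).card := Finset.card_union_le _ _
    _ = 2 * (gBall G x0 k).card := by rw [hball p.1, hball p.2]; omega

lemma genN2 {V : Type*} [Fintype V] (G : SimpleGraph V) (r : ℕ) (x y : V) (h : G.dist x y = 2)
    (L : Finset V) (hL1 : ∀ z ∈ L, G.dist x z ≤ r) (hL2 : ∀ z ∈ L, G.dist y z ≤ r) :
    L.card ≤ gNs G 2 r := by
  have hmemp : (x, y) ∈ Finset.univ.filter (fun p : V × V => G.dist p.1 p.2 = 2) := by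
    simp [h]
  refine le_trans ?_ (Finset.le_sup hmemp)
  show L.card ≤ (gBall G x r ∩ gBall G y r).card
  apply Finset.card_le_card
  intro z hz
  rw [Finset.mem_inter, mem_gBall, mem_gBall]
  exact ⟨hL1 z hz, hL2 z hz⟩


end S17

open S17 in
set_option maxHeartbeats 2000000 in
theorem statement17_aux (r : ℕ) (hr : 2 ≤ r) :
    ∃ n₀ : ℕ, ∀ n : ℕ, n₀ ≤ n → gNs (symT n) 1 r < gNs (symT n) 2 r := by
  obtain ⟨k, rfl⟩ : ∃ k, r = k + 1 := ⟨r - 1, by omega⟩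
  have hk : 1 ≤ k := by omega
  refine ⟨2 ^ (2 * k) * (8 * (2 * k)! * (2 * k)!) + 4 * k + 8, ?_⟩
  intro n hn
  have hfacpos : 0 < (2 * k)! := Nat.factorial_pos _
  have hpowpos : 0 < 2 ^ (2 * k) := Nat.pow_pos (by norm_num)
  have hn12 : 4 * k + 8 ≤ n := by omega
  have hn3 : 3 ≤ n := by omega
  have hnk : 2 * k + 3 ≤ n := by omega
  have hconn := symT_connected n
  set a : Fin n := ⟨0, by omega⟩ with ha
  set b : Fin n := ⟨1, by omega⟩ with hb
  set c : Fin n := ⟨2, by omega⟩ with hc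
  have hab : a ≠ b := by simp [ha, hb, Fin.ext_iff]
  have hac : a ≠ c := by simp [ha, hc, Fin.ext_iff]
  have hbc : b ≠ c := by simp [hb, hc, Fin.ext_iff]
  set g : Perm (Fin n) := swap a b * swap b c with hg
  have hga : g a = b := by
    rw [hg, Equiv.Perm.mul_apply, Equiv.swap_apply_of_ne_of_ne hab hac, Equiv.swap_apply_left]
  have hgb : g b = c := by
    rw [hg, Equiv.Perm.mul_apply, Equiv.swap_apply_left,
      Equiv.swap_apply_of_ne_of_ne (Ne.symm hac) (Ne.symm hbc)]
  have hgc : g c = a := by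
    rw [hg, Equiv.Perm.mul_apply, Equiv.swap_apply_right, Equiv.swap_apply_right]
  -- the set W
  set W : Finset (Perm (Fin n)) := Finset.univ.filter
    (fun z => z * z = 1 ∧ z.support.card = 2 * k ∧ z a = a ∧ z b = b ∧ z c = c) with hW
  -- ball size invariance
  have ballcard : ∀ (x : Perm (Fin n)) (m : ℕ),
      (gBall (symT n) x m).card = (gBall (symT n) 1 m).card := by
    intro x m
    apply Finset.card_nbij' (i := fun z => x⁻¹ * z) (j := fun z => x * z)
    · intro z hz
      rw [Finset.mem_coe, mem_gBall] at hz ⊢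
      have h := dist_mul_left (n := n) x⁻¹ x z
      rw [inv_mul_cancel] at h
      rw [h]
      exact hz
    · intro z hz
      rw [Finset.mem_coe, mem_gBall] at hz ⊢
      have h := dist_mul_left (n := n) x 1 z
      rw [mul_one] at h
      rw [h]
      exact hz
    · intro z _; group
    · intro z _; group
  -- STEP B : upper bound for gNs 1
  have stepB : gNs (symT n) 1 (k + 1) ≤ 2 * (gBall (symT n) 1 k).card := by
    apply genN1
    · intro x y z hxy h1 h2
      have hadj : (symT n).Adj x y := SimpleGraph.dist_eq_one_iff_adj.mp hxy
      have s1 := sign_dist x z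
      have s2 := sign_dist y z
      rw [h1] at s1
      rw [h2] at s2
      obtain ⟨u, v, huv, hswe⟩ := hadj
      have hsgn : Equiv.Perm.sign (x⁻¹ * y) = -1 := by
        rw [hswe]; exact Equiv.Perm.sign_swap huv
      have hsplit : x⁻¹ * z = (x⁻¹ * y) * (y⁻¹ * z) := by group
      rw [hsplit, map_mul, hsgn, s2] at s1
      rcases Int.units_eq_one_or ((-1 : ℤˣ) ^ (k + 1)) with h | h <;> rw [h] at s1
      · exact absurd s1 (by decide)
      · exact absurd s1 (by decide)
    · intro x; exact ballcard x k
  -- STEP C : ball decomposition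
  set Small : Finset (Perm (Fin n)) :=
    Finset.univ.filter (fun z => z.support.card ≤ 2 * k - 1) with hSmall
  set TouchA : Finset (Perm (Fin n)) :=
    Finset.univ.filter (fun z => a ∈ z.support ∧ z.support.card ≤ 2 * k) with hTA
  set TouchB : Finset (Perm (Fin n)) :=
    Finset.univ.filter (fun z => b ∈ z.support ∧ z.support.card ≤ 2 * k) with hTB
  set TouchC : Finset (Perm (Fin n)) :=
    Finset.univ.filter (fun z => c ∈ z.support ∧ z.support.card ≤ 2 * k) with hTC
  have stepC : gBall (symT n) 1 k ⊆ Small ∪ TouchA ∪ TouchB ∪ TouchC ∪ W := by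
    intro z hz
    rw [mem_gBall] at hz
    simp only [Finset.mem_union]
    rcases eq_or_ne ((symT n).dist 1 z) 0 with h0 | h0
    · have hz1 : z = 1 := ((hconn.dist_eq_zero_iff).mp h0).symm
      subst hz1
      refine Or.inl (Or.inl (Or.inl (Or.inl ?_)))
      rw [hSmall, Finset.mem_filter]
      simp
    · obtain ⟨p, hp⟩ := SimpleGraph.exists_walk_of_dist_ne_zero h0
      obtain ⟨l, hl, hlen, hprod⟩ := list_of_walk p
      rw [one_mul] at hprod
      have hlk : l.length ≤ k := by rw [hlen, hp]; exact hz
      by_cases hsml : z.support.card ≤ 2 * k - 1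
      · refine Or.inl (Or.inl (Or.inl (Or.inl ?_)))
        rw [hSmall, Finset.mem_filter]
        exact ⟨Finset.mem_univ _, hsml⟩
      · have hcardle : z.support.card ≤ 2 * k := by
          rw [← hprod]
          calc l.prod.support.card ≤ 2 * l.length := support_prod_card_le l hl
            _ ≤ 2 * k := by omega
        have hcard : z.support.card = 2 * k := by omega
        have hsq : z * z = 1 := by
          rw [← hprod]
          apply sq_one_of_tight l hl
          rw [hprod, hcard]
          omega
        by_cases hta : a ∈ z.support
        · refine Or.inl (Or.inl (Or.inl (Or.inr ?_)))
          rw [hTA, Finset.mem_filter]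
          exact ⟨Finset.mem_univ _, hta, hcardle⟩
        by_cases htb : b ∈ z.support
        · refine Or.inl (Or.inl (Or.inr ?_))
          rw [hTB, Finset.mem_filter]
          exact ⟨Finset.mem_univ _, htb, hcardle⟩
        by_cases htc : c ∈ z.support
        · refine Or.inl (Or.inr ?_)
          rw [hTC, Finset.mem_filter]
          exact ⟨Finset.mem_univ _, htc, hcardle⟩
        · refine Or.inr ?_
          rw [hW]
          simp only [Finset.mem_filter, Finset.mem_univ, true_and]
          exact ⟨hsq, hcard, Equiv.Perm.notMem_support.mp hta,
            Equiv.Perm.notMem_support.mp htb, Equiv.Perm.notMem_support.mp htc⟩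
  -- count bounds
  have hcardFin : Fintype.card (Fin n) = n := Fintype.card_fin n
  have hSmallle : Small.card ≤ n ^ (2 * k - 1) * (2 * k)! := by
    rw [hSmall]
    calc (Finset.univ.filter (fun z : Perm (Fin n) => z.support.card ≤ 2 * k - 1)).card
        ≤ (Fintype.card (Fin n)).choose (2 * k - 1) * (2 * k - 1)! :=
          card_small_support_le (2 * k - 1) (by omega)
      _ ≤ n ^ (2 * k - 1) * (2 * k)! := by
          rw [hcardFin]
          apply Nat.mul_le_mul
          · exact (Nat.choose_le_descFactorial n _).trans (Nat.descFactorial_le_pow n _)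
          · exact Nat.factorial_le (by omega)
  have hTouchle : ∀ x0 : Fin n,
      (Finset.univ.filter (fun z : Perm (Fin n) => x0 ∈ z.support ∧ z.support.card ≤ 2 * k)).card
        ≤ n ^ (2 * k - 1) * (2 * k)! := by
    intro x0
    calc (Finset.univ.filter
          (fun z : Perm (Fin n) => x0 ∈ z.support ∧ z.support.card ≤ 2 * k)).card
        ≤ (Fintype.card (Fin n)).choose (2 * k - 1) * (2 * k)! := by
          have := card_touch_le x0 (2 * k) (by omega) (by omega)
          simpa using this
      _ ≤ n ^ (2 * k - 1) * (2 * k)! := by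
          rw [hcardFin]
          apply Nat.mul_le_mul_right
          exact (Nat.choose_le_descFactorial n _).trans (Nat.descFactorial_le_pow n _)
  have hBk : (gBall (symT n) 1 k).card ≤ W.card + 4 * (n ^ (2 * k - 1) * (2 * k)!) := by
    calc (gBall (symT n) 1 k).card ≤ (Small ∪ TouchA ∪ TouchB ∪ TouchC ∪ W).card :=
          Finset.card_le_card stepC
      _ ≤ Small.card + TouchA.card + TouchB.card + TouchC.card + W.card := by
          refine (Finset.card_union_le _ _).trans ?_
          have h1 := Finset.card_union_le (Small ∪ TouchA ∪ TouchB) TouchC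
          have h2 := Finset.card_union_le (Small ∪ TouchA) TouchB
          have h3 := Finset.card_union_le Small TouchA
          omega
      _ ≤ W.card + 4 * (n ^ (2 * k - 1) * (2 * k)!) := by
          have t1 := hTouchle a
          have t2 := hTouchle b
          have t3 := hTouchle c
          rw [← hTA] at t1
          rw [← hTB] at t2
          rw [← hTC] at t3
          omega
  -- distance 1 g = 2
  have hdist2 : (symT n).dist 1 g = 2 := by
    have hle : (symT n).dist 1 g ≤ 2 := by
      have : (1 : Perm (Fin n)) * ([swap a b, swap b c]).prod = g := by
        simp [hg]
      exact dist_le_of_list _ (by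
        intro t ht
        simp only [List.mem_cons, List.not_mem_nil, or_false, List.mem_singleton] at ht
        rcases ht with rfl | rfl
        exacts [⟨a, b, hab, rfl⟩, ⟨b, c, hbc, rfl⟩]) this
    have hne1 : g ≠ 1 := by
      intro h
      have : g a = a := by rw [h]; rfl
      rw [hga] at this
      exact hab this.symm
    have h0 : (symT n).dist 1 g ≠ 0 := by
      intro h
      exact hne1 ((hconn.dist_eq_zero_iff.mp h).symm)
    have h1 : (symT n).dist 1 g ≠ 1 := by
      intro h
      have hadj : (symT n).Adj 1 g := SimpleGraph.dist_eq_one_iff_adj.mp h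
      have hsw : ((1 : Perm (Fin n))⁻¹ * g).IsSwap := hadj
      rw [inv_one, one_mul] at hsw
      obtain ⟨u, v, huv, hgv⟩ := hsw
      have hsq : g * g = 1 := by rw [hgv]; exact Equiv.swap_mul_self u v
      have : (g * g) a = a := by rw [hsq]; rfl
      rw [Equiv.Perm.mul_apply, hga, hgb] at this
      exact hac this.symm
    omega
  -- the three swaps
  set s1 : Perm (Fin n) := swap a b with hs1
  set s2 : Perm (Fin n) := swap b c with hs2
  set s3 : Perm (Fin n) := swap a c with hs3
  have hginv : g⁻¹ = s2 * s1 := by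
    rw [hg, mul_inv_rev, Equiv.swap_inv, Equiv.swap_inv]
  have hid1 : g⁻¹ * s1 = s2 := by
    rw [hginv, hs1, hs2, mul_assoc, Equiv.swap_mul_self, mul_one]
  have hid2 : g⁻¹ * s2 = swap c a := by
    rw [hginv, hs1, hs2, mul_assoc]
    rw [← mul_assoc]
    exact Equiv.swap_mul_swap_mul_swap hab hac
  have hid3 : g⁻¹ * s3 = s1 := by
    have e1 : s2 * s1 = swap c a * s2 := by
      have h := Equiv.swap_mul_swap_mul_swap hab hac
      rw [← hs1, ← hs2] at h
      calc s2 * s1 = (s2 * s1 * s2) * s2 := by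
            rw [mul_assoc, hs2, Equiv.swap_mul_self, mul_one]
        _ = swap c a * s2 := by rw [h]
    rw [hginv, e1, hs3, hs2, mul_assoc]
    have hcomm : swap a c = swap c a := Equiv.swap_comm a c
    rw [hcomm]
    exact Equiv.swap_mul_swap_mul_swap hbc (Ne.symm hab)
  -- the family S of swaps
  set Sf : Finset (Perm (Fin n)) := {s1, s2, s3} with hSf
  have hs12 : s1 ≠ s2 := by
    intro h
    have : s1 a = s2 a := by rw [h]
    rw [hs1, hs2, Equiv.swap_apply_left, Equiv.swap_apply_of_ne_of_ne hab hac] at this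
    exact hab this.symm
  have hs13 : s1 ≠ s3 := by
    intro h
    have : s1 b = s3 b := by rw [h]
    rw [hs1, hs3, Equiv.swap_apply_right,
      Equiv.swap_apply_of_ne_of_ne (Ne.symm hab) hbc] at this
    exact hab this
  have hs23 : s2 ≠ s3 := by
    intro h
    have : s2 b = s3 b := by rw [h]
    rw [hs2, hs3, Equiv.swap_apply_left,
      Equiv.swap_apply_of_ne_of_ne (Ne.symm hab) hbc] at this
    exact hbc this.symm
  have hSfcard : Sf.card = 3 := by
    rw [hSf]
    rw [Finset.card_insert_of_notMem (by simp [hs12, hs13]),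
      Finset.card_insert_of_notMem (by simp [hs23])]
    simp
  have hfix : ∀ s ∈ Sf, ∀ t : Fin n, t ≠ a → t ≠ b → t ≠ c → s t = t := by
    intro s hs t h1 h2 h3
    rw [hSf] at hs
    simp only [Finset.mem_insert, Finset.mem_singleton] at hs
    rcases hs with rfl | rfl | rfl
    · exact Equiv.swap_apply_of_ne_of_ne h1 h2
    · exact Equiv.swap_apply_of_ne_of_ne h2 h3
    · exact Equiv.swap_apply_of_ne_of_ne h1 h3
  have hswapS : ∀ s ∈ Sf, Equiv.Perm.IsSwap s := by
    intro s hs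
    rw [hSf] at hs
    simp only [Finset.mem_insert, Finset.mem_singleton] at hs
    rcases hs with rfl | rfl | rfl
    exacts [⟨a, b, hab, rfl⟩, ⟨b, c, hbc, rfl⟩, ⟨a, c, hac, rfl⟩]
  have hginvS : ∀ s ∈ Sf, Equiv.Perm.IsSwap (g⁻¹ * s) := by
    intro s hs
    rw [hSf] at hs
    simp only [Finset.mem_insert, Finset.mem_singleton] at hs
    rcases hs with rfl | rfl | rfl
    · rw [hid1]; exact ⟨b, c, hbc, rfl⟩
    · rw [hid2]; exact ⟨c, a, Ne.symm hac, rfl⟩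
    · rw [hid3]; exact ⟨a, b, hab, rfl⟩
  -- the product family
  set L : Finset (Perm (Fin n)) := (Sf ×ˢ W).image (fun p => p.1 * p.2) with hL
  have hLdist : ∀ z ∈ L, (symT n).dist 1 z ≤ k + 1 ∧ (symT n).dist g z ≤ k + 1 := by
    intro z hz
    rw [hL, Finset.mem_image] at hz
    obtain ⟨⟨s, w⟩, hsw, rfl⟩ := hz
    rw [Finset.mem_product] at hsw
    obtain ⟨hsS, hwW⟩ := hsw
    rw [hW, Finset.mem_filter] at hwW
    obtain ⟨-, hw1, hw2, hwa, hwb, hwc⟩ := hwW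
    obtain ⟨l, hl1, hl2, hl3⟩ := invol_factor k w hw1 hw2
    constructor
    · have hprod : (1 : Perm (Fin n)) * (s :: l).prod = s * w := by
        rw [one_mul, List.prod_cons, hl2]
      have := dist_le_of_list (s :: l) (by
        intro t ht
        rcases List.mem_cons.mp ht with rfl | h
        · exact hswapS t hsS
        · exact hl1 t h) hprod
      simpa [hl3] using this
    · have hprod : g * ((g⁻¹ * s) :: l).prod = s * w := by
        rw [List.prod_cons, hl2, ← mul_assoc, mul_inv_cancel_left]
      have := dist_le_of_list ((g⁻¹ * s) :: l) (by
        intro t ht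
        rcases List.mem_cons.mp ht with rfl | h
        · exact hginvS s hsS
        · exact hl1 t h) hprod
      simpa [hl3] using this
  have hLcard : L.card = 3 * W.card := by
    rw [hL]
    rw [Finset.card_image_of_injOn, Finset.card_product, hSfcard]
    intro p hp q hq hpq
    simp only [Finset.coe_product, Set.mem_prod, Finset.mem_coe] at hp hq
    obtain ⟨hp1, hp2⟩ := hp
    obtain ⟨hq1, hq2⟩ := hq
    rw [hW, Finset.mem_filter] at hp2 hq2
    obtain ⟨-, -, -, hpa, hpb, hpc⟩ := hp2
    obtain ⟨-, -, -, hqa, hqb, hqc⟩ := hq2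
    simp only at hpq
    have key : ∀ t, p.2 t = t → q.2 t = t → p.1 t = q.1 t := by
      intro t ht1 ht2
      have e1 : (p.1 * p.2) t = p.1 t := by rw [Equiv.Perm.mul_apply, ht1]
      have e2 : (q.1 * q.2) t = q.1 t := by rw [Equiv.Perm.mul_apply, ht2]
      rw [← e1, ← e2, hpq]
    have hss : p.1 = q.1 := by
      apply Equiv.ext
      intro t
      by_cases h1 : t = a
      · rw [h1]; exact key a hpa hqa
      by_cases h2 : t = b
      · rw [h2]; exact key b hpb hqb
      by_cases h3 : t = c
      · rw [h3]; exact key c hpc hqc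
      · rw [hfix p.1 hp1 t h1 h2 h3, hfix q.1 hq1 t h1 h2 h3]
    have hww : p.2 = q.2 := by
      have h := hpq
      rw [hss] at h
      exact mul_left_cancel h
    exact Prod.ext hss hww
  have stepA : 3 * W.card ≤ gNs (symT n) 2 (k + 1) := by
    rw [← hLcard]
    exact genN2 (symT n) (k + 1) 1 g hdist2 L
      (fun z hz => (hLdist z hz).1) (fun z hz => (hLdist z hz).2)
  -- STEP D : W is large
  have hWlb : (n - 3).choose (2 * k) ≤ W.card := by
    have habc : ({a, b, c} : Finset (Fin n)).card = 3 := by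
      rw [Finset.card_insert_of_notMem (by simp [hab, hac]),
        Finset.card_insert_of_notMem (by simp [hbc])]
      simp
    have hsurj : Set.SurjOn (fun z : Perm (Fin n) => z.support) ↑W
        ↑(Finset.powersetCard (2 * k) (Finset.univ \ {a, b, c})) := by
      intro u hu
      rw [Finset.mem_coe, Finset.mem_powersetCard] at hu
      obtain ⟨hu1, hu2⟩ := hu
      obtain ⟨z, hz1, hz2⟩ := exists_invol k u hu2
      have hnot : ∀ t ∈ ({a, b, c} : Finset (Fin n)), z t = t := by
        intro t ht
        apply Equiv.Perm.notMem_support.mp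
        rw [hz2]
        intro hmem2
        have h2 := hu1 hmem2
        rw [Finset.mem_sdiff] at h2
        exact h2.2 ht
      refine ⟨z, ?_, hz2⟩
      rw [Finset.mem_coe, hW, Finset.mem_filter]
      refine ⟨Finset.mem_univ _, hz1, by rw [hz2]; exact hu2, ?_, ?_, ?_⟩
      · exact hnot a (by simp)
      · exact hnot b (by simp)
      · exact hnot c (by simp)
    have hsc := Finset.card_le_card_of_surjOn _ hsurj
    calc (n - 3).choose (2 * k)
        = (Finset.powersetCard (2 * k) (Finset.univ \ ({a, b, c} : Finset (Fin n)))).card := by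
          rw [Finset.card_powersetCard, Finset.card_sdiff_of_subset (Finset.subset_univ _), habc,
            Finset.card_univ, hcardFin]
      _ ≤ W.card := hsc
  -- final arithmetic
  have hE : 2 * (4 * (n ^ (2 * k - 1) * (2 * k)!)) < W.card := by
    have key : (2 * k)! * (2 * (4 * (n ^ (2 * k - 1) * (2 * k)!))) < (2 * k)! * W.card := by
      have hd1 : (2 * k)! * ((n - 3).choose (2 * k)) = (n - 3).descFactorial (2 * k) :=
        (Nat.descFactorial_eq_factorial_mul_choose _ _).symm
      have hd2 : (n - (2 * k + 2)) ^ (2 * k) ≤ (n - 3).descFactorial (2 * k) := by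
        have h := pow_le_descFactorial (2 * k) (n - 3)
        have he : n - 3 + 1 - 2 * k = n - (2 * k + 2) := by omega
        rwa [he] at h
      have h1 : n ≤ 2 * (n - (2 * k + 2)) := by omega
      have h2 : n ^ (2 * k) ≤ 2 ^ (2 * k) * (n - (2 * k + 2)) ^ (2 * k) := by
        calc n ^ (2 * k) ≤ (2 * (n - (2 * k + 2))) ^ (2 * k) := Nat.pow_le_pow_left h1 _
          _ = 2 ^ (2 * k) * (n - (2 * k + 2)) ^ (2 * k) := mul_pow 2 _ _
      have h3 : 2 ^ (2 * k) * (8 * (2 * k)! * (2 * k)!) < n := by omega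
      have hnpos : 0 < n ^ (2 * k - 1) := Nat.pow_pos (by omega)
      have h4 : 2 ^ (2 * k) * (8 * (2 * k)! * (2 * k)!) * n ^ (2 * k - 1) < n ^ (2 * k) := by
        have hmul := Nat.mul_lt_mul_of_lt_of_le h3 (le_refl (n ^ (2 * k - 1))) hnpos
        calc 2 ^ (2 * k) * (8 * (2 * k)! * (2 * k)!) * n ^ (2 * k - 1)
            < n * n ^ (2 * k - 1) := hmul
          _ = n ^ (2 * k) := by
              rw [← pow_succ']
              congr 1
              omega
      have h5 : 8 * (2 * k)! * (2 * k)! * n ^ (2 * k - 1) <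
          (n - (2 * k + 2)) ^ (2 * k) := by
        have h6 := h4.trans_le h2
        exact Nat.lt_of_mul_lt_mul_left (a := 2 ^ (2 * k)) (by
          calc 2 ^ (2 * k) * (8 * (2 * k)! * (2 * k)! * n ^ (2 * k - 1))
              = 2 ^ (2 * k) * (8 * (2 * k)! * (2 * k)!) * n ^ (2 * k - 1) := by ring
            _ < 2 ^ (2 * k) * (n - (2 * k + 2)) ^ (2 * k) := h6)
      calc (2 * k)! * (2 * (4 * (n ^ (2 * k - 1) * (2 * k)!)))
          = 8 * (2 * k)! * (2 * k)! * n ^ (2 * k - 1) := by ring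
        _ < (n - (2 * k + 2)) ^ (2 * k) := h5
        _ ≤ (n - 3).descFactorial (2 * k) := hd2
        _ = (2 * k)! * ((n - 3).choose (2 * k)) := hd1.symm
        _ ≤ (2 * k)! * W.card := Nat.mul_le_mul_left _ hWlb
    exact Nat.lt_of_mul_lt_mul_left key
  calc gNs (symT n) 1 (k + 1) ≤ 2 * (gBall (symT n) 1 k).card := stepB
    _ ≤ 2 * (W.card + 4 * (n ^ (2 * k - 1) * (2 * k)!)) := Nat.mul_le_mul_left _ hBk
    _ < 3 * W.card := by omega
    _ ≤ gNs (symT n) 2 (k + 1) := stepA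


/-- Theorem 8(ii) of the paper. For every fixed `r ≥ 2` there exists `n₀`
such that `N_2(Sym_n(T), r) > N_1(Sym_n(T), r)` for all `n ≥ n₀`. -/
theorem statement17 (r : ℕ) (hr : 2 ≤ r) :
    ∃ n₀ : ℕ, ∀ n : ℕ, n₀ ≤ n → gNs (symT n) 1 r < gNs (symT n) 2 r :=
  statement17_aux r hr
end
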